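/- arXiv:2505.20946 — 17 statements merged into one kernel-verified Lean document; each statement's English description precedes it below -/
import Mathlib

section
/- Suppose (λ_j − d)(λ_j + d + 2k) > 0 for all j = 1,…,p, that k + d ≠ 0, and that α_j ≠ 0 for at least one j. Then SB_LTE − SB_AULTE > 0; that is, the squared bias of the almost unbiased Liu-type estimator is strictly smaller than the squared bias of the Liu-type estimator. -/
open Finset

/-- If `(λ_j − d)(λ_j + d + 2k) > 0` for all `j`, `k + d ≠ 0`, and some `α_j ≠ 0`,
then the squared bias of AULTE is strictly smaller than that of LTE. -/
theorem sb_LTE_sub_sb_AULTE_pos (p : ℕ) (hp : 1 ≤ p)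
    (lam α : Fin p → ℝ) (hlam : ∀ j, 0 < lam j) (k d : ℝ) (hk : 0 < k)
    (h : ∀ j, (lam j - d) * (lam j + d + 2 * k) > 0)
    (hkd : k + d ≠ 0) (hα : ∃ j, α j ≠ 0) :
    (∑ j, (k + d) ^ 2 * (α j) ^ 2 / (lam j + k) ^ 2) -
      (∑ j, (k + d) ^ 4 * (α j) ^ 2 / (lam j + k) ^ 4) > 0 := by
  rw [← Finset.sum_sub_distrib]
  obtain ⟨j0, hj0⟩ := hα
  have key : ∀ j : Fin p, α j ≠ 0 →
      0 < (k + d) ^ 2 * (α j) ^ 2 / (lam j + k) ^ 2 -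
        (k + d) ^ 4 * (α j) ^ 2 / (lam j + k) ^ 4 := by
    intro j hj
    have hlk : 0 < lam j + k := by linarith [hlam j]
    have hdiff : (k + d) ^ 2 < (lam j + k) ^ 2 := by nlinarith [h j]
    have e : (k + d) ^ 2 * (α j) ^ 2 / (lam j + k) ^ 2 -
        (k + d) ^ 4 * (α j) ^ 2 / (lam j + k) ^ 4 =
        (k + d) ^ 2 * (α j) ^ 2 * ((lam j + k) ^ 2 - (k + d) ^ 2) / (lam j + k) ^ 4 := by
      field_simp
    rw [e]
    apply div_pos _ (by positivity)
    have h1 : 0 < (k + d) ^ 2 := by positivity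
    have h2 : 0 < (α j) ^ 2 := by positivity
    exact mul_pos (mul_pos h1 h2) (by linarith)
  apply Finset.sum_pos' _ ⟨j0, Finset.mem_univ _, key j0 hj0⟩
  intro j _
  rcases eq_or_ne (α j) 0 with hj | hj
  · simp [hj]
  · exact (key j hj).le
end

section
/- Suppose that for every j = 1,…,p one has d > λ_j and (k+d)(d − λ_j) < 2(λ_j+k)², and that α_j ≠ 0 for at least one j. Then SB_LTE − SB_MAULTE > 0; that is, the squared bias of the modified almost unbiased Liu-type estimator is strictly smaller than the squared bias of the Liu-type estimator. -/
open Finset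

lemma term_nonneg (lam α k d : ℝ) (hlam : 0 < lam) (hk : 0 < k)
    (hd : d > lam) (hbd : (k + d) * (d - lam) < 2 * (lam + k) ^ 2) :
    0 ≤ (k + d) ^ 2 * α ^ 2 / (lam + k) ^ 2 -
      (k + d) ^ 2 * α ^ 2 * ((lam + k) ^ 2 + (k + d) * (lam - d)) ^ 2 / (lam + k) ^ 6 := by
  have hL : 0 < lam + k := by linarith
  have hB : 0 < (k + d) * (d - lam) := by nlinarith
  rw [sub_nonneg, div_le_div_iff₀ (by positivity) (by positivity)]
  nlinarith [sq_nonneg α, sq_nonneg (lam + k), mul_pos hB (sub_pos.mpr hbd),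
    sq_nonneg ((lam + k) * α), mul_nonneg (mul_nonneg (mul_pos hB (sub_pos.mpr hbd)).le (sq_nonneg α)) (sq_nonneg (lam+k)),
    pow_pos hL 2, pow_pos hL 4]

lemma term_pos (lam α k d : ℝ) (hlam : 0 < lam) (hk : 0 < k) (hα : α ≠ 0)
    (hd : d > lam) (hbd : (k + d) * (d - lam) < 2 * (lam + k) ^ 2) :
    0 < (k + d) ^ 2 * α ^ 2 / (lam + k) ^ 2 -
      (k + d) ^ 2 * α ^ 2 * ((lam + k) ^ 2 + (k + d) * (lam - d)) ^ 2 / (lam + k) ^ 6 := by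
  have hL : 0 < lam + k := by linarith
  have hB : 0 < (k + d) * (d - lam) := by nlinarith
  have hα2 : 0 < α ^ 2 := by positivity
  rw [sub_pos, div_lt_div_iff₀ (by positivity) (by positivity)]
  have hkd : 0 < (k + d) ^ 2 := by nlinarith
  nlinarith [mul_pos hB (sub_pos.mpr hbd), pow_pos hL 2,
    mul_pos (mul_pos (mul_pos hkd hα2) (mul_pos hB (sub_pos.mpr hbd))) (pow_pos hL 2)]

/-- If `d > λ_j` and `(k+d)(d − λ_j) < 2(λ_j+k)²` for all `j`, and some `α_j ≠ 0`,
then the squared bias of MAULTE is strictly smaller than that of LTE. -/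
theorem sb_LTE_sub_sb_MAULTE_pos (p : ℕ) (hp : 1 ≤ p)
    (lam α : Fin p → ℝ) (hlam : ∀ j, 0 < lam j) (k d : ℝ) (hk : 0 < k)
    (hd : ∀ j, d > lam j) (hbd : ∀ j, (k + d) * (d - lam j) < 2 * (lam j + k) ^ 2)
    (hα : ∃ j, α j ≠ 0) :
    (∑ j, (k + d) ^ 2 * (α j) ^ 2 / (lam j + k) ^ 2) -
      (∑ j, (k + d) ^ 2 * (α j) ^ 2 *
        ((lam j + k) ^ 2 + (k + d) * (lam j - d)) ^ 2 / (lam j + k) ^ 6) > 0 := by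
  rw [← Finset.sum_sub_distrib]
  obtain ⟨j0, hj0⟩ := hα
  exact Finset.sum_pos' (fun j _ => term_nonneg (lam j) (α j) k d (hlam j) hk (hd j) (hbd j))
    ⟨j0, Finset.mem_univ j0, term_pos (lam j0) (α j0) k d (hlam j0) hk hj0 (hd j0) (hbd j0)⟩
end

section
/- Suppose that for every j = 1,…,p one has −λ_j − 2k < d < λ_j − √2·(λ_j + k), and that α_j ≠ 0 for at least one j. Then SB_AULTE − SB_MAULTE > 0; that is, the squared bias of the modified almost unbiased Liu-type estimator is strictly smaller than the squared bias of the almost unbiased Liu-type estimator. -/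
open Finset

lemma sq_diff_pos_aux (l k d : ℝ) (hl : 0 < l) (hk : 0 < k)
    (h1 : -l - 2 * k < d) (h2 : d < l - Real.sqrt 2 * (l + k)) :
    0 < ((k + d) * (l + k)) ^ 2 - ((l + k) ^ 2 + (k + d) * (l - d)) ^ 2 := by
  set s := l + k with hs
  have hspos : 0 < s := by positivity
  have hsqrt1 : (1 : ℝ) < Real.sqrt 2 := by
    rw [show (1:ℝ) = Real.sqrt 1 by simp]
    exact Real.sqrt_lt_sqrt (by norm_num) (by norm_num)
  have hsq2 : Real.sqrt 2 * Real.sqrt 2 = 2 := Real.mul_self_sqrt (by norm_num)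
  -- X - Y = (k+d)^2 - s^2 < 0
  have hXY1 : (k + d) ^ 2 - s ^ 2 < 0 := by
    have hlow : -s < k + d := by simp only [hs]; linarith
    have hhigh : k + d < s := by nlinarith
    have := sq_lt_sq' hlow hhigh
    linarith
  -- bounds
  have hb1 : (Real.sqrt 2 - 1) * s < -(k + d) := by nlinarith
  have hb2 : Real.sqrt 2 * s < l - d := by nlinarith
  have hb1' : 0 < (Real.sqrt 2 - 1) * s := by nlinarith
  have hb2' : 0 < (1 + Real.sqrt 2) * s := by nlinarith
  have hmul : ((Real.sqrt 2 - 1) * s) * ((1 + Real.sqrt 2) * s) <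
      (-(k + d)) * (s + (l - d)) := by
    apply mul_lt_mul'' hb1 (by nlinarith) (le_of_lt hb1') (le_of_lt hb2')
  have hprod : s ^ 2 < (-(k + d)) * (s + (l - d)) := by nlinarith
  -- X + Y < 0
  have hXY2 : (k + d) * s + (s ^ 2 + (k + d) * (l - d)) < 0 := by nlinarith
  have hXmY : (k + d) * s - (s ^ 2 + (k + d) * (l - d)) < 0 := by nlinarith
  nlinarith [mul_pos_of_neg_of_neg hXmY hXY2]

/-- If `−λ_j − 2k < d < λ_j − √2·(λ_j + k)` for all `j`, and some `α_j ≠ 0`,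
then the squared bias of MAULTE is strictly smaller than that of AULTE. -/
theorem sb_AULTE_sub_sb_MAULTE_pos (p : ℕ) (hp : 1 ≤ p)
    (lam α : Fin p → ℝ) (hlam : ∀ j, 0 < lam j) (k d : ℝ) (hk : 0 < k)
    (hd₁ : ∀ j, -lam j - 2 * k < d)
    (hd₂ : ∀ j, d < lam j - Real.sqrt 2 * (lam j + k))
    (hα : ∃ j, α j ≠ 0) :
    (∑ j, (k + d) ^ 4 * (α j) ^ 2 / (lam j + k) ^ 4) -
      (∑ j, (k + d) ^ 2 * (α j) ^ 2 *
        ((lam j + k) ^ 2 + (k + d) * (lam j - d)) ^ 2 / (lam j + k) ^ 6) > 0 := by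
  rw [gt_iff_lt, ← Finset.sum_sub_distrib]
  obtain ⟨j₀, hj₀⟩ := hα
  have key : ∀ j : Fin p, (k + d) ^ 4 * (α j) ^ 2 / (lam j + k) ^ 4 -
      (k + d) ^ 2 * (α j) ^ 2 * ((lam j + k) ^ 2 + (k + d) * (lam j - d)) ^ 2 /
        (lam j + k) ^ 6 =
      (k + d) ^ 2 * (α j) ^ 2 / (lam j + k) ^ 6 *
        (((k + d) * (lam j + k)) ^ 2 -
          ((lam j + k) ^ 2 + (k + d) * (lam j - d)) ^ 2) := by
    intro j
    have hs : lam j + k ≠ 0 := by have := hlam j; positivity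
    field_simp
  have hposfac : ∀ j : Fin p,
      0 < ((k + d) * (lam j + k)) ^ 2 -
        ((lam j + k) ^ 2 + (k + d) * (lam j - d)) ^ 2 :=
    fun j => sq_diff_pos_aux (lam j) k d (hlam j) hk (hd₁ j) (hd₂ j)
  apply Finset.sum_pos' (fun j _ => by
      rw [key j]
      have := hlam j
      have := hposfac j
      positivity)
  refine ⟨j₀, Finset.mem_univ _, ?_⟩
  rw [key j₀]
  have h1 := hlam j₀
  have h2 := hposfac j₀
  have hsqrt1 : (1 : ℝ) < Real.sqrt 2 := by
    rw [show (1:ℝ) = Real.sqrt 1 by simp]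
    exact Real.sqrt_lt_sqrt (by norm_num) (by norm_num)
  have hkd : k + d ≠ 0 := by nlinarith [hd₂ j₀]
  have : (0:ℝ) < (k + d) ^ 2 * (α j₀) ^ 2 / (lam j₀ + k) ^ 6 := by positivity
  exact mul_pos this h2
end

section
/- Suppose −(k + d)(2λ_j + 3k + d) > 0 for all j = 1,…,p. Then Var_LTE − Var_AULTE > 0; that is, the almost unbiased Liu-type estimator has strictly smaller total variance than the Liu-type estimator. -/
open Finset

/-- If `−(k + d)(2λ_j + 3k + d) > 0` for all `j`, then the AULTE has strictly
smaller total variance than the LTE. -/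
theorem var_LTE_sub_var_AULTE_pos (p : ℕ) (hp : 1 ≤ p)
    (lam : Fin p → ℝ) (hlam : ∀ j, 0 < lam j) (k d : ℝ) (hk : 0 < k)
    (h : ∀ j, -(k + d) * (2 * lam j + 3 * k + d) > 0) :
    (∑ j, (lam j - d) ^ 2 / (lam j * (lam j + k) ^ 2)) -
      (∑ j, (lam j - d) ^ 2 * (lam j + 2 * k + d) ^ 2 / (lam j * (lam j + k) ^ 4)) > 0 := by
  rw [← Finset.sum_sub_distrib]
  apply Finset.sum_pos
  · intro j _
    have hl := hlam j
    have hj := h j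
    have hlk : 0 < lam j + k := by linarith
    have hd : lam j - d ≠ 0 := by
      intro hdeq
      have : d = lam j := by linarith
      nlinarith
    have h1 : (lam j - d) ^ 2 > 0 := by positivity
    have hden : 0 < lam j * (lam j + k) ^ 4 := by positivity
    have key : (lam j + k) ^ 2 - (lam j + 2 * k + d) ^ 2 = -(k + d) * (2 * lam j + 3 * k + d) := by
      ring
    rw [div_sub_div _ _ (by positivity : lam j * (lam j + k) ^ 2 ≠ 0) (ne_of_gt hden)]
    apply div_pos
    · nlinarith [sq_nonneg (lam j + k), mul_pos h1 hj, mul_pos hl (pow_pos hlk 2)]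
    · positivity
  · exact Finset.univ_nonempty_iff.mpr (Fin.pos_iff_nonempty.mp hp)
end

section
/- (Trenkler–Toutenburg lemma.) Let D be a symmetric positive definite real p×p matrix and let a₁, a₂ ∈ ℝ^p. Then a₂ᵀ (D + a₁a₁ᵀ)⁻¹ a₂ < 1 if and only if the matrix D + a₁a₁ᵀ − a₂a₂ᵀ is positive definite. -/
open Matrix

private lemma vmv_mulVec {p : ℕ} (a x : Fin p → ℝ) :
    vecMulVec a a *ᵥ x = (a ⬝ᵥ x) • a := by
  ext i
  simp [vecMulVec_apply, mulVec, dotProduct, Finset.mul_sum, mul_comm, mul_assoc, mul_left_comm]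

private lemma dot_symm {p : ℕ} {M : Matrix (Fin p) (Fin p) ℝ} (h : M.IsHermitian)
    (u v : Fin p → ℝ) : u ⬝ᵥ M *ᵥ v = v ⬝ᵥ M *ᵥ u := by
  have ht : Mᵀ = M := by simpa using h.eq
  conv_lhs => rw [dotProduct_mulVec, ← ht, vecMul_transpose]
  rw [dotProduct_comm]

private lemma vmv_posSemidef {p : ℕ} (a : Fin p → ℝ) : (vecMulVec a a).PosSemidef := by
  apply PosSemidef.of_dotProduct_mulVec_nonneg
  · ext i j
    simp [vecMulVec_apply, mul_comm]
  · intro x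
    have : vecMulVec a a *ᵥ x = (a ⬝ᵥ x) • a := vmv_mulVec a x
    simp only [star_trivial, this, dotProduct_smul, smul_eq_mul, dotProduct_comm x a]
    exact mul_self_nonneg _

private lemma cauchy_schwarz_psd {p : ℕ} {M : Matrix (Fin p) (Fin p) ℝ} (hM : M.PosSemidef)
    (u v : Fin p → ℝ) :
    (u ⬝ᵥ M *ᵥ v) ^ 2 ≤ (u ⬝ᵥ M *ᵥ u) * (v ⬝ᵥ M *ᵥ v) := by
  set A := v ⬝ᵥ M *ᵥ v with hA
  set B := u ⬝ᵥ M *ᵥ v with hB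
  set C := u ⬝ᵥ M *ᵥ u with hC
  have key : ∀ t : ℝ, 0 ≤ A * (t * t) + (2 * B) * t + C := by
    intro t
    have h0 := hM.dotProduct_mulVec_nonneg (u + t • v)
    simp only [star_trivial] at h0
    have hexp : (u + t • v) ⬝ᵥ M *ᵥ (u + t • v) = A * (t * t) + (2 * B) * t + C := by
      rw [mulVec_add, mulVec_smul, dotProduct_add, add_dotProduct, add_dotProduct,
        dotProduct_smul, smul_dotProduct, smul_dotProduct, dotProduct_smul]
      have hsym : v ⬝ᵥ M *ᵥ u = B := by rw [hB, dot_symm hM.1]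
      simp only [smul_eq_mul, hsym, ← hA, ← hB, ← hC]
      ring
    linarith [hexp ▸ h0]
  have hd : discrim A (2 * B) C ≤ 0 := discrim_le_zero key
  rw [discrim] at hd
  nlinarith

/-- Trenkler–Toutenburg lemma: For a symmetric positive definite `D` and vectors
`a₁, a₂`, one has `a₂ᵀ (D + a₁a₁ᵀ)⁻¹ a₂ < 1` iff `D + a₁a₁ᵀ − a₂a₂ᵀ` is positive definite. -/
theorem trenkler_toutenburg (p : ℕ) (D : Matrix (Fin p) (Fin p) ℝ) (hD : D.PosDef)
    (a₁ a₂ : Fin p → ℝ) :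
    a₂ ⬝ᵥ (D + vecMulVec a₁ a₁)⁻¹ *ᵥ a₂ < 1 ↔
      (D + vecMulVec a₁ a₁ - vecMulVec a₂ a₂).PosDef := by
  set M := D + vecMulVec a₁ a₁ with hMdef
  have hM : M.PosDef := hD.add_posSemidef (vmv_posSemidef a₁)
  have hMinv : M * M⁻¹ = 1 := mul_nonsing_inv M (isUnit_iff_ne_zero.mpr hM.det_pos.ne')
  set b : Fin p → ℝ := M⁻¹ *ᵥ a₂ with hbdef
  have hMb : M *ᵥ b = a₂ := by
    rw [hbdef, mulVec_mulVec, hMinv, one_mulVec]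
  set c : ℝ := a₂ ⬝ᵥ M⁻¹ *ᵥ a₂ with hcdef
  have hc_eq : b ⬝ᵥ M *ᵥ b = c := by
    rw [hMb, dotProduct_comm, hcdef, hbdef]
  -- quadratic form of the difference
  have hq : ∀ x : Fin p → ℝ, x ⬝ᵥ (M - vecMulVec a₂ a₂) *ᵥ x
      = x ⬝ᵥ M *ᵥ x - (a₂ ⬝ᵥ x) ^ 2 := by
    intro x
    rw [sub_mulVec, dotProduct_sub, vmv_mulVec, dotProduct_smul, smul_eq_mul,
      dotProduct_comm x a₂, sq]
  have hherm : (M - vecMulVec a₂ a₂).IsHermitian :=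
    hM.1.sub (vmv_posSemidef a₂).1
  constructor
  · intro hc
    refine PosDef.of_dotProduct_mulVec_pos hherm (fun x hx => ?_)
    simp only [star_trivial]
    rw [hq x]
    have hMx : 0 < x ⬝ᵥ M *ᵥ x := by simpa using hM.dotProduct_mulVec_pos hx
    have hcs : (b ⬝ᵥ M *ᵥ x) ^ 2 ≤ (b ⬝ᵥ M *ᵥ b) * (x ⬝ᵥ M *ᵥ x) :=
      cauchy_schwarz_psd hM.posSemidef b x
    have hbx : b ⬝ᵥ M *ᵥ x = a₂ ⬝ᵥ x := by
      rw [dot_symm hM.1, hMb, dotProduct_comm]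
    rw [hbx, hc_eq] at hcs
    nlinarith
  · intro hP
    by_cases ha₂ : a₂ = 0
    · rw [hcdef, ha₂]
      simp
    · have hb : b ≠ 0 := by
        intro h
        apply ha₂
        rw [← hMb, h, mulVec_zero]
      have h1 : 0 < b ⬝ᵥ (M - vecMulVec a₂ a₂) *ᵥ b := by simpa using hP.dotProduct_mulVec_pos hb
      rw [hq b] at h1
      have h2 : a₂ ⬝ᵥ b = c := by rw [hcdef, hbdef]
      rw [hc_eq, h2] at h1
      have hcpos : 0 < c := by
        rw [← hc_eq]
        simpa using hM.dotProduct_mulVec_pos hb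
      nlinarith
end

section
/- The difference of covariance matrices of the Liu-type estimator and the almost unbiased Liu-type estimator admits the spectral decomposition Cov_LTE − Cov_AULTE = Q · diag( (λ_j − d)² · (−(k+d)(2λ_j + 3k + d)) / (λ_j (λ_j + k)⁴) ; j = 1,…,p ) · Qᵀ. -/
open Matrix

/-- Covariance matrix of the Liu-type estimator (LTE). -/
noncomputable def covLTE {p : ℕ} (V : Matrix (Fin p) (Fin p) ℝ) (k d : ℝ) :
    Matrix (Fin p) (Fin p) ℝ :=
  (V + k • 1)⁻¹ * (V - d • 1) * V⁻¹ * (V - d • 1) * (V + k • 1)⁻¹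

/-- Covariance matrix of the almost unbiased Liu-type estimator (AULTE). -/
noncomputable def covAULTE {p : ℕ} (V : Matrix (Fin p) (Fin p) ℝ) (k d : ℝ) :
    Matrix (Fin p) (Fin p) ℝ :=
  (1 - (k + d) ^ 2 • ((V + k • 1)⁻¹) ^ 2) * V⁻¹ * (1 - (k + d) ^ 2 • ((V + k • 1)⁻¹) ^ 2)

/-- The matrix `M` entering the modified almost unbiased Liu-type estimator (MAULTE). -/
noncomputable def mMAULTE {p : ℕ} (V : Matrix (Fin p) (Fin p) ℝ) (k d : ℝ) :
    Matrix (Fin p) (Fin p) ℝ :=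
  (1 - (k + d) ^ 2 • ((V + k • 1)⁻¹) ^ 2) * (1 - (k + d) • (V + k • 1)⁻¹)

/-- Covariance matrix of the MAULTE. -/
noncomputable def covMAULTE {p : ℕ} (V : Matrix (Fin p) (Fin p) ℝ) (k d : ℝ) :
    Matrix (Fin p) (Fin p) ℝ :=
  mMAULTE V k d * V⁻¹ * (mMAULTE V k d)ᵀ

/-- Bias vector of the LTE. -/
noncomputable def biasLTE {p : ℕ} (V : Matrix (Fin p) (Fin p) ℝ) (k d : ℝ) (β : Fin p → ℝ) :
    Fin p → ℝ :=
  (-(d + k)) • ((V + k • 1)⁻¹ *ᵥ β)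

/-- Bias vector of the AULTE. -/
noncomputable def biasAULTE {p : ℕ} (V : Matrix (Fin p) (Fin p) ℝ) (k d : ℝ) (β : Fin p → ℝ) :
    Fin p → ℝ :=
  (-(d + k) ^ 2) • (((V + k • 1)⁻¹) ^ 2 *ᵥ β)

/-- Bias vector of the MAULTE. -/
noncomputable def biasMAULTE {p : ℕ} (V : Matrix (Fin p) (Fin p) ℝ) (k d : ℝ) (β : Fin p → ℝ) :
    Fin p → ℝ :=
  (-(d + k)) •
    (((1 + (d + k) • (V + k • 1)⁻¹ - (d + k) ^ 2 • ((V + k • 1)⁻¹) ^ 2) * (V + k • 1)⁻¹) *ᵥ β)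

/-- Matrix mean squared error built from a covariance matrix and a bias vector. -/
noncomputable def mmse {p : ℕ} (C : Matrix (Fin p) (Fin p) ℝ) (b : Fin p → ℝ) :
    Matrix (Fin p) (Fin p) ℝ :=
  C + vecMulVec b b

/-- Spectral decomposition of `Cov_LTE − Cov_AULTE`. -/
theorem covLTE_sub_covAULTE_eq (p : ℕ) (Q : Matrix (Fin p) (Fin p) ℝ) (hQ : Q * Qᵀ = 1)
    (lam : Fin p → ℝ) (hlam : ∀ j, 0 < lam j) (k d : ℝ) (hk : 0 < k) :
    covLTE (Q * Matrix.diagonal lam * Qᵀ) k d - covAULTE (Q * Matrix.diagonal lam * Qᵀ) k d =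
      Q * Matrix.diagonal (fun j =>
        (lam j - d) ^ 2 * (-(k + d) * (2 * lam j + 3 * k + d)) /
          (lam j * (lam j + k) ^ 4)) * Qᵀ := by
  have hQ' : Qᵀ * Q = 1 := mul_eq_one_comm.mp hQ
  set C : (Fin p → ℝ) → Matrix (Fin p) (Fin p) ℝ :=
    fun f => Q * Matrix.diagonal f * Qᵀ with hC
  have conj_mul : ∀ f g : Fin p → ℝ, C f * C g = C (fun j => f j * g j) := by
    intro f g
    simp only [hC, Matrix.mul_assoc]
    rw [← Matrix.mul_assoc Qᵀ Q, hQ', Matrix.one_mul,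
      ← Matrix.mul_assoc (Matrix.diagonal f) (Matrix.diagonal g),
      Matrix.diagonal_mul_diagonal]
  have conj_one : C (fun _ => (1 : ℝ)) = 1 := by
    simp [hC, Matrix.diagonal_one, hQ]
  have conj_inv : ∀ f : Fin p → ℝ, (∀ j, f j ≠ 0) → (C f)⁻¹ = C fun j => (f j)⁻¹ := by
    intro f hf
    refine Matrix.inv_eq_left_inv ?_
    rw [conj_mul]
    have : (fun j => (f j)⁻¹ * f j) = fun _ => (1 : ℝ) :=
      funext fun j => inv_mul_cancel₀ (hf j)
    rw [this, conj_one]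
  have conj_smul : ∀ (r : ℝ) (f : Fin p → ℝ), r • C f = C fun j => r * f j := by
    intro r f
    have hf : (fun j => r * f j) = r • f := rfl
    simp only [hC, hf, Matrix.diagonal_smul, Matrix.smul_mul, Matrix.mul_smul]
  have conj_sub : ∀ f g : Fin p → ℝ, C f - C g = C fun j => f j - g j := by
    intro f g
    simp only [hC, ← Matrix.diagonal_sub, Matrix.sub_mul, Matrix.mul_sub]
  have conj_add : ∀ f g : Fin p → ℝ, C f + C g = C fun j => f j + g j := by
    intro f g
    simp only [hC, ← Matrix.diagonal_add, Matrix.add_mul, Matrix.mul_add]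
  have hlk : ∀ j, lam j + k ≠ 0 := fun j => ne_of_gt (add_pos (hlam j) hk)
  have hl0 : ∀ j, lam j ≠ 0 := fun j => ne_of_gt (hlam j)
  have hV : Q * Matrix.diagonal lam * Qᵀ = C lam := rfl
  have hVk : C lam + k • (1 : Matrix (Fin p) (Fin p) ℝ) = C fun j => lam j + k := by
    have h1 : k • (1 : Matrix (Fin p) (Fin p) ℝ) = C fun _ => k := by
      rw [← conj_one, conj_smul]; simp
    rw [h1, conj_add]
  have hVd : C lam - d • (1 : Matrix (Fin p) (Fin p) ℝ) = C fun j => lam j - d := by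
    have h1 : d • (1 : Matrix (Fin p) (Fin p) ℝ) = C fun _ => d := by
      rw [← conj_one, conj_smul]; simp
    rw [h1, conj_sub]
  have hVinv : (C lam)⁻¹ = C fun j => (lam j)⁻¹ := conj_inv lam hl0
  have hW : (C fun j => lam j + k)⁻¹ = C fun j => (lam j + k)⁻¹ := conj_inv _ hlk
  have hone : (1 : Matrix (Fin p) (Fin p) ℝ) = C fun _ => (1 : ℝ) := conj_one.symm
  rw [covLTE, covAULTE, hV, hVk, hVd, hVinv, hW]
  simp only [sq, hone, conj_mul, conj_smul, conj_sub]
  refine congrArg C (funext fun j => ?_)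
  have h1 := hl0 j
  have h2 := hlk j
  field_simp
  ring
end

section
/- Suppose −(k + d)(2λ_j + 3k + d) > 0 for all j = 1,…,p. Then the matrix S₁ = Cov_LTE − Cov_AULTE is positive definite. -/
open Matrix

section Helpers
variable {p : ℕ} {Q : Matrix (Fin p) (Fin p) ℝ}

lemma conjQ_posDef (hQ : Q * Qᵀ = 1) {M : Matrix (Fin p) (Fin p) ℝ} (hM : M.PosDef) :
    (Q * M * Qᵀ).PosDef := by
  rw [posDef_iff_dotProduct_mulVec]
  constructor
  · have h1 : Qᵀ = Qᴴ := by ext i j; simp [conjTranspose]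
    rw [h1]
    exact isHermitian_mul_mul_conjTranspose Q hM.isHermitian
  · intro x hx
    have hy : Qᵀ *ᵥ x ≠ 0 := by
      intro hcon
      apply hx
      have : Q *ᵥ (Qᵀ *ᵥ x) = x := by rw [mulVec_mulVec, hQ, one_mulVec]
      rw [hcon, mulVec_zero] at this
      exact this ▸ rfl
    have := hM.dotProduct_mulVec_pos hy
    simpa [star_trivial, dotProduct_mulVec, ← mulVec_transpose, mulVec_mulVec,
      Matrix.mul_assoc] using this

lemma conjQ_mul (hQ : Qᵀ * Q = 1) (A B : Matrix (Fin p) (Fin p) ℝ) :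
    (Q * A * Qᵀ) * (Q * B * Qᵀ) = Q * (A * B) * Qᵀ := by
  calc (Q * A * Qᵀ) * (Q * B * Qᵀ) = Q * (A * ((Qᵀ * Q) * (B * Qᵀ))) := by
        simp only [Matrix.mul_assoc]
    _ = Q * (A * B) * Qᵀ := by rw [hQ, Matrix.one_mul]; simp only [Matrix.mul_assoc]

lemma conjQ_inv (hQ : Q * Qᵀ = 1) (v : Fin p → ℝ) (hv : ∀ j, v j ≠ 0) :
    (Q * diagonal v * Qᵀ)⁻¹ = Q * diagonal (fun j => (v j)⁻¹) * Qᵀ := by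
  have hQ' : Qᵀ * Q = 1 := mul_eq_one_comm.mp hQ
  apply inv_eq_right_inv
  rw [conjQ_mul hQ', diagonal_mul_diagonal]
  have : (fun j => v j * (v j)⁻¹) = fun _ => (1 : ℝ) := by
    funext j; exact mul_inv_cancel₀ (hv j)
  rw [this, diagonal_one, Matrix.mul_one, hQ]

lemma smul_one_eq_diag (c : ℝ) :
    c • (1 : Matrix (Fin p) (Fin p) ℝ) = diagonal (fun _ => c) := by
  ext i j
  by_cases hij : i = j <;> simp [Matrix.one_apply, diagonal_apply, hij]

lemma conjQ_smul_one (hQ : Q * Qᵀ = 1) (c : ℝ) :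
    (c • (1 : Matrix (Fin p) (Fin p) ℝ)) = Q * diagonal (fun _ => c) * Qᵀ := by
  rw [← smul_one_eq_diag, Matrix.mul_smul, Matrix.smul_mul, Matrix.mul_one, hQ]

end Helpers

/-- If `−(k + d)(2λ_j + 3k + d) > 0` for all `j`, then
`S₁ = Cov_LTE − Cov_AULTE` is positive definite. -/
theorem covLTE_sub_covAULTE_posDef (p : ℕ) (Q : Matrix (Fin p) (Fin p) ℝ) (hQ : Q * Qᵀ = 1)
    (lam : Fin p → ℝ) (hlam : ∀ j, 0 < lam j) (k d : ℝ) (hk : 0 < k)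
    (h : ∀ j, -(k + d) * (2 * lam j + 3 * k + d) > 0) :
    (covLTE (Q * Matrix.diagonal lam * Qᵀ) k d -
      covAULTE (Q * Matrix.diagonal lam * Qᵀ) k d).PosDef := by
  have hQ' : Qᵀ * Q = 1 := mul_eq_one_comm.mp hQ
  have hu : ∀ j, 0 < lam j + k := fun j => add_pos (hlam j) hk
  have e1 : Q * diagonal lam * Qᵀ + k • 1 = Q * diagonal (fun j => lam j + k) * Qᵀ := by
    rw [conjQ_smul_one hQ k, ← Matrix.add_mul, ← Matrix.mul_add, diagonal_add]
  have e2 : (Q * diagonal lam * Qᵀ + k • 1)⁻¹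
      = Q * diagonal (fun j => (lam j + k)⁻¹) * Qᵀ := by
    rw [e1, conjQ_inv hQ _ (fun j => (hu j).ne')]
  have e3 : (Q * diagonal lam * Qᵀ)⁻¹ = Q * diagonal (fun j => (lam j)⁻¹) * Qᵀ :=
    conjQ_inv hQ _ (fun j => (hlam j).ne')
  have e4 : Q * diagonal lam * Qᵀ - d • 1 = Q * diagonal (fun j => lam j - d) * Qᵀ := by
    rw [conjQ_smul_one hQ d, ← Matrix.sub_mul, ← Matrix.mul_sub, diagonal_sub]
  have e5 : (1 : Matrix (Fin p) (Fin p) ℝ) - (k + d) ^ 2 • ((Q * diagonal lam * Qᵀ + k • 1)⁻¹) ^ 2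
      = Q * diagonal (fun j => 1 - (k + d) ^ 2 * ((lam j + k)⁻¹) ^ 2) * Qᵀ := by
    have hsq : ((Q * diagonal (fun j => (lam j + k)⁻¹) * Qᵀ) : Matrix (Fin p) (Fin p) ℝ) ^ 2
        = Q * diagonal (fun j => ((lam j + k)⁻¹) ^ 2) * Qᵀ := by
      rw [sq, conjQ_mul hQ', diagonal_mul_diagonal]
      have : (fun i => (lam i + k)⁻¹ * (lam i + k)⁻¹) = fun j => ((lam j + k)⁻¹) ^ 2 :=
        funext fun i => (sq _).symm
      rw [this]
    rw [e2, hsq]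
    have hsm : (k + d) ^ 2 • (Q * diagonal (fun j => ((lam j + k)⁻¹) ^ 2) * Qᵀ)
        = Q * diagonal (fun j => (k + d) ^ 2 * ((lam j + k)⁻¹) ^ 2) * Qᵀ := by
      have hd : (k + d) ^ 2 • diagonal (fun j => ((lam j + k)⁻¹) ^ 2)
          = diagonal (fun j => (k + d) ^ 2 * ((lam j + k)⁻¹) ^ 2) := by
        rw [← diagonal_smul]; rfl
      rw [← hd, Matrix.mul_smul, Matrix.smul_mul]
    have hone : (1 : Matrix (Fin p) (Fin p) ℝ) = Q * diagonal (fun _ => (1:ℝ)) * Qᵀ := by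
      rw [diagonal_one, Matrix.mul_one, hQ]
    rw [hsm, hone, ← Matrix.sub_mul, ← Matrix.mul_sub, diagonal_sub]
  rw [covLTE, covAULTE, e5, e2, e3, e4]
  simp only [conjQ_mul hQ', diagonal_mul_diagonal]
  rw [← Matrix.sub_mul, ← Matrix.mul_sub, diagonal_sub]
  apply conjQ_posDef hQ
  rw [posDef_diagonal_iff]
  intro j
  have ha := hlam j
  have hak := hu j
  have hj := h j
  have had : lam j ≠ d := by
    intro hcon
    rw [← hcon] at hj
    nlinarith
  have key : (lam j + k)⁻¹ * (lam j - d) * (lam j)⁻¹ * (lam j - d) * (lam j + k)⁻¹ -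
      (1 - (k + d) ^ 2 * ((lam j + k)⁻¹) ^ 2) * (lam j)⁻¹ *
        (1 - (k + d) ^ 2 * ((lam j + k)⁻¹) ^ 2)
      = ((lam j - d) ^ 2 * (-(k + d) * (2 * lam j + 3 * k + d))) /
          (lam j * (lam j + k) ^ 4) := by
    field_simp
    ring
  rw [key]
  apply div_pos
  · have h0 : lam j - d ≠ 0 := sub_ne_zero.mpr had
    have hsq : (0:ℝ) < (lam j - d) ^ 2 :=
      lt_of_le_of_ne (sq_nonneg _) (Ne.symm (pow_ne_zero 2 h0))
    exact mul_pos hsq hj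
  · positivity
end

section
/- Suppose −(k + d)(2λ_j + 3k + d) > 0 for all j = 1,…,p, and let β ∈ ℝ^p. Then MMSE_LTE − MMSE_AULTE is positive definite if and only if b_AULTEᵀ (S₁ + b_LTE b_LTEᵀ)⁻¹ b_AULTE < 1, where S₁ = Cov_LTE − Cov_AULTE. -/
open Matrix

open Matrix

section AuxMMSE

variable {p : ℕ}

lemma auxVecMulVec_mulVec (u v x : Fin p → ℝ) :
    Matrix.vecMulVec u v *ᵥ x = (v ⬝ᵥ x) • u := by
  ext i
  simp [Matrix.mulVec, Matrix.vecMulVec_apply, dotProduct, Finset.sum_mul,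
    Finset.mul_sum, mul_comm, mul_left_comm]

lemma auxIsHermitian_vecMulVec (u : Fin p → ℝ) : (Matrix.vecMulVec u u).IsHermitian := by
  ext i j
  simp [Matrix.vecMulVec_apply, Matrix.conjTranspose_apply, mul_comm]

lemma auxPosSemidef_vecMulVec (u : Fin p → ℝ) : (Matrix.vecMulVec u u).PosSemidef := by
  refine Matrix.PosSemidef.of_dotProduct_mulVec_nonneg (auxIsHermitian_vecMulVec u) (fun x => ?_)
  rw [auxVecMulVec_mulVec]
  simp only [star_trivial, dotProduct_smul, smul_eq_mul]
  rw [dotProduct_comm x u]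
  exact mul_self_nonneg _

lemma auxPosDef_conj {Q M : Matrix (Fin p) (Fin p) ℝ} (hQ : Q * Qᵀ = 1)
    (hM : M.PosDef) : (Q * M * Qᵀ).PosDef := by
  have hMh : Mᴴ = M := hM.isHermitian
  refine Matrix.PosDef.of_dotProduct_mulVec_pos ?_ ?_
  · have : Qᵀ = Qᴴ := (Matrix.conjTranspose_eq_transpose_of_trivial Q).symm
    rw [this]
    exact Matrix.isHermitian_mul_mul_conjTranspose Q hM.isHermitian
  · intro x hx
    have hy : Qᵀ *ᵥ x ≠ 0 := by
      intro h0
      apply hx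
      have : Q *ᵥ (Qᵀ *ᵥ x) = x := by
        rw [Matrix.mulVec_mulVec, hQ, Matrix.one_mulVec]
      rw [← this, h0, Matrix.mulVec_zero]
    have := hM.dotProduct_mulVec_pos hy
    simp only [star_trivial] at this ⊢
    calc 0 < (Qᵀ *ᵥ x) ⬝ᵥ (M *ᵥ (Qᵀ *ᵥ x)) := this
    _ = x ⬝ᵥ ((Q * M * Qᵀ) *ᵥ x) := by
        rw [← Matrix.mulVec_mulVec, ← Matrix.mulVec_mulVec, Matrix.dotProduct_mulVec x,
          ← Matrix.mulVec_transpose]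

lemma auxPosDef_sub_vecMulVec_iff {A : Matrix (Fin p) (Fin p) ℝ}
    (hA : A.PosDef) (u : Fin p → ℝ) :
    (A - Matrix.vecMulVec u u).PosDef ↔ u ⬝ᵥ A⁻¹ *ᵥ u < 1 := by
  have hdet : IsUnit A.det := (Matrix.isUnit_iff_isUnit_det _).mp hA.isUnit
  have hAinv : A⁻¹.PosDef := hA.inv
  set w : Fin p → ℝ := A⁻¹ *ᵥ u with hw
  have hAu : A *ᵥ w = u := by
    rw [hw, Matrix.mulVec_mulVec, Matrix.mul_nonsing_inv _ hdet, Matrix.one_mulVec]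
  set t : ℝ := u ⬝ᵥ w with htdef
  have hAsymm : Aᵀ = A := by
    have := hA.isHermitian
    rwa [Matrix.IsHermitian, Matrix.conjTranspose_eq_transpose_of_trivial] at this
  have hwAx : ∀ x : Fin p → ℝ, w ⬝ᵥ (A *ᵥ x) = u ⬝ᵥ x := by
    intro x
    rw [Matrix.dotProduct_mulVec]
    congr 1
    rw [← Matrix.mulVec_transpose, hAsymm, hAu]
  constructor
  · intro hPD
    by_cases hu : u = 0
    · have : t = 0 := by rw [htdef, hu]; simp
      rw [this]; norm_num
    · have hw0 : w ≠ 0 := by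
        intro h0
        apply hu
        rw [← hAu, h0, Matrix.mulVec_zero]
      have hq := hPD.dotProduct_mulVec_pos hw0
      simp only [star_trivial] at hq
      have hexp : w ⬝ᵥ ((A - Matrix.vecMulVec u u) *ᵥ w) = t - t * t := by
        simp only [Matrix.sub_mulVec, dotProduct_sub, auxVecMulVec_mulVec,
          dotProduct_smul, smul_eq_mul, hwAx w, dotProduct_comm w u, htdef]
        try ring
      rw [hexp] at hq
      have htpos : 0 < t := by
        have := hAinv.dotProduct_mulVec_pos hu
        simpa [star_trivial, htdef, hw] using this
      nlinarith
  · intro hlt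
    refine Matrix.PosDef.of_dotProduct_mulVec_pos (hA.isHermitian.sub (auxIsHermitian_vecMulVec u)) fun x hx => ?_
    simp only [star_trivial]
    have hq : 0 < x ⬝ᵥ (A *ᵥ x) := by
      have := hA.dotProduct_mulVec_pos hx
      simpa [star_trivial] using this
    have ht0 : 0 ≤ t := by
      have := hAinv.posSemidef.dotProduct_mulVec_nonneg u
      simpa [star_trivial, htdef, hw] using this
    have hall : ∀ s : ℝ, 0 ≤ t * (s * s) + (2 * (x ⬝ᵥ u)) * s + x ⬝ᵥ (A *ᵥ x) := by
      intro s
      have h0 := hA.posSemidef.dotProduct_mulVec_nonneg (x + s • w)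
      simp only [star_trivial] at h0
      have hexp : (x + s • w) ⬝ᵥ (A *ᵥ (x + s • w))
          = t * (s * s) + (2 * (x ⬝ᵥ u)) * s + x ⬝ᵥ (A *ᵥ x) := by
        simp only [Matrix.mulVec_add, Matrix.mulVec_smul, hAu, add_dotProduct,
          dotProduct_add, smul_dotProduct, dotProduct_smul,
          smul_eq_mul, hwAx x, dotProduct_comm u x, dotProduct_comm w u,
          htdef]
        try ring
      rw [← hexp]; exact h0
    have hdisc := discrim_le_zero hall
    rw [discrim] at hdisc
    have hkey : (x ⬝ᵥ u) ^ 2 ≤ t * (x ⬝ᵥ (A *ᵥ x)) := by nlinarith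
    have hfin : x ⬝ᵥ ((A - Matrix.vecMulVec u u) *ᵥ x)
        = x ⬝ᵥ (A *ᵥ x) - (x ⬝ᵥ u) ^ 2 := by
      rw [Matrix.sub_mulVec, dotProduct_sub, auxVecMulVec_mulVec,
        dotProduct_smul, smul_eq_mul, dotProduct_comm u x, sq]
    rw [hfin]
    nlinarith

end AuxMMSE


section Diag

variable {p : ℕ} {Q : Matrix (Fin p) (Fin p) ℝ}

lemma auxCMul (hQ' : Qᵀ * Q = 1) (u v : Fin p → ℝ) :
    (Q * Matrix.diagonal u * Qᵀ) * (Q * Matrix.diagonal v * Qᵀ)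
      = Q * Matrix.diagonal (fun j => u j * v j) * Qᵀ := by
  have hmid : ∀ X : Matrix (Fin p) (Fin p) ℝ, Qᵀ * (Q * X) = X := fun X => by
    rw [← Matrix.mul_assoc, hQ', Matrix.one_mul]
  calc (Q * Matrix.diagonal u * Qᵀ) * (Q * Matrix.diagonal v * Qᵀ)
      = Q * (Matrix.diagonal u * (Qᵀ * (Q * (Matrix.diagonal v * Qᵀ)))) := by
        simp only [Matrix.mul_assoc]
    _ = Q * (Matrix.diagonal u * Matrix.diagonal v) * Qᵀ := by
        rw [hmid]; simp only [Matrix.mul_assoc]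
    _ = Q * Matrix.diagonal (fun j => u j * v j) * Qᵀ := by
        rw [Matrix.diagonal_mul_diagonal]

lemma auxCAdd (u v : Fin p → ℝ) :
    (Q * Matrix.diagonal u * Qᵀ) + (Q * Matrix.diagonal v * Qᵀ)
      = Q * Matrix.diagonal (fun j => u j + v j) * Qᵀ := by
  rw [show Matrix.diagonal (fun j => u j + v j) = Matrix.diagonal u + Matrix.diagonal v by
    rw [← Matrix.diagonal_add]]
  rw [Matrix.mul_add, Matrix.add_mul]

lemma auxCSub (u v : Fin p → ℝ) :
    (Q * Matrix.diagonal u * Qᵀ) - (Q * Matrix.diagonal v * Qᵀ)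
      = Q * Matrix.diagonal (fun j => u j - v j) * Qᵀ := by
  rw [show Matrix.diagonal (fun j => u j - v j) = Matrix.diagonal u - Matrix.diagonal v by
    rw [← Matrix.diagonal_sub]]
  rw [Matrix.mul_sub, Matrix.sub_mul]

lemma auxCSmul (c : ℝ) (u : Fin p → ℝ) :
    c • (Q * Matrix.diagonal u * Qᵀ) = Q * Matrix.diagonal (fun j => c * u j) * Qᵀ := by
  rw [show Matrix.diagonal (fun j => c * u j) = c • Matrix.diagonal u by
    rw [← Matrix.diagonal_smul]; rfl]
  rw [Matrix.mul_smul, Matrix.smul_mul]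

lemma auxDiagCongr {f g : Fin p → ℝ} (h : ∀ j, f j = g j) :
    Q * Matrix.diagonal f * Qᵀ = Q * Matrix.diagonal g * Qᵀ := by
  rw [funext h]

lemma auxCOne (hQ : Q * Qᵀ = 1) :
    (1 : Matrix (Fin p) (Fin p) ℝ) = Q * Matrix.diagonal (fun _ => 1) * Qᵀ := by
  rw [Matrix.diagonal_one, Matrix.mul_one, hQ]

lemma auxCInv (hQ : Q * Qᵀ = 1) (hQ' : Qᵀ * Q = 1) (u : Fin p → ℝ) (hu : ∀ j, u j ≠ 0) :
    (Q * Matrix.diagonal u * Qᵀ)⁻¹ = Q * Matrix.diagonal (fun j => (u j)⁻¹) * Qᵀ := by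
  apply Matrix.inv_eq_right_inv
  rw [auxCMul hQ', show (fun j => u j * (u j)⁻¹) = fun _ : Fin p => (1:ℝ) from
    funext fun j => mul_inv_cancel₀ (hu j), ← auxCOne hQ]

end Diag

section Main

variable {p : ℕ} {Q : Matrix (Fin p) (Fin p) ℝ} {lam : Fin p → ℝ} {k d : ℝ}

lemma auxCovLTE_diag (hQ : Q * Qᵀ = 1) (hQ' : Qᵀ * Q = 1)
    (hl : ∀ j, lam j ≠ 0) (hlk : ∀ j, lam j + k ≠ 0) :
    covLTE (Q * Matrix.diagonal lam * Qᵀ) k d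
      = Q * Matrix.diagonal (fun j =>
          (lam j - d) ^ 2 * (lam j)⁻¹ * ((lam j + k)⁻¹) ^ 2) * Qᵀ := by
  have h1 : Q * Matrix.diagonal lam * Qᵀ + k • 1
      = Q * Matrix.diagonal (fun j => lam j + k) * Qᵀ := by
    rw [auxCOne hQ, auxCSmul, auxCAdd]; exact auxDiagCongr fun j => by ring
  have h2 : Q * Matrix.diagonal lam * Qᵀ - d • 1
      = Q * Matrix.diagonal (fun j => lam j - d) * Qᵀ := by
    rw [auxCOne hQ, auxCSmul, auxCSub]; exact auxDiagCongr fun j => by ring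
  rw [covLTE, h1, h2, auxCInv hQ hQ' _ hlk, auxCInv hQ hQ' _ hl,
    auxCMul hQ', auxCMul hQ', auxCMul hQ', auxCMul hQ']
  exact auxDiagCongr fun j => by ring

lemma auxCovAULTE_diag (hQ : Q * Qᵀ = 1) (hQ' : Qᵀ * Q = 1)
    (hl : ∀ j, lam j ≠ 0) (hlk : ∀ j, lam j + k ≠ 0) :
    covAULTE (Q * Matrix.diagonal lam * Qᵀ) k d
      = Q * Matrix.diagonal (fun j =>
          (1 - (k + d) ^ 2 * ((lam j + k)⁻¹) ^ 2) ^ 2 * (lam j)⁻¹) * Qᵀ := by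
  have h1 : Q * Matrix.diagonal lam * Qᵀ + k • 1
      = Q * Matrix.diagonal (fun j => lam j + k) * Qᵀ := by
    rw [auxCOne hQ, auxCSmul, auxCAdd]; exact auxDiagCongr fun j => by ring
  have h3 : (1 : Matrix (Fin p) (Fin p) ℝ)
        - (k + d) ^ 2 • ((Q * Matrix.diagonal lam * Qᵀ + k • 1)⁻¹) ^ 2
      = Q * Matrix.diagonal (fun j => 1 - (k + d) ^ 2 * ((lam j + k)⁻¹) ^ 2) * Qᵀ := by
    rw [h1, auxCInv hQ hQ' _ hlk,
      pow_two (Q * Matrix.diagonal (fun j => (lam j + k)⁻¹) * Qᵀ), auxCMul hQ', auxCSmul, auxCOne hQ, auxCSub]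
    exact auxDiagCongr fun j => by ring
  rw [covAULTE, h3, auxCInv hQ hQ' _ hl, auxCMul hQ', auxCMul hQ']
  exact auxDiagCongr fun j => by ring

end Main

/-- MMSE comparison of LTE and AULTE. -/
theorem mmseLTE_sub_mmseAULTE_posDef_iff (p : ℕ) (Q : Matrix (Fin p) (Fin p) ℝ)
    (hQ : Q * Qᵀ = 1) (lam : Fin p → ℝ) (hlam : ∀ j, 0 < lam j) (k d : ℝ) (hk : 0 < k)
    (h : ∀ j, -(k + d) * (2 * lam j + 3 * k + d) > 0) (β : Fin p → ℝ) :
    (mmse (covLTE (Q * Matrix.diagonal lam * Qᵀ) k d)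
        (biasLTE (Q * Matrix.diagonal lam * Qᵀ) k d β) -
      mmse (covAULTE (Q * Matrix.diagonal lam * Qᵀ) k d)
        (biasAULTE (Q * Matrix.diagonal lam * Qᵀ) k d β)).PosDef ↔
      biasAULTE (Q * Matrix.diagonal lam * Qᵀ) k d β ⬝ᵥ
        ((covLTE (Q * Matrix.diagonal lam * Qᵀ) k d -
            covAULTE (Q * Matrix.diagonal lam * Qᵀ) k d) +
          Matrix.vecMulVec (biasLTE (Q * Matrix.diagonal lam * Qᵀ) k d β)
            (biasLTE (Q * Matrix.diagonal lam * Qᵀ) k d β))⁻¹ *ᵥ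
        biasAULTE (Q * Matrix.diagonal lam * Qᵀ) k d β < 1 := by
  have hQ' : Qᵀ * Q = 1 := mul_eq_one_comm.mp hQ
  have hl : ∀ j, lam j ≠ 0 := fun j => (hlam j).ne'
  have hlk0 : ∀ j, 0 < lam j + k := fun j => by have := hlam j; linarith
  have hlk : ∀ j, lam j + k ≠ 0 := fun j => (hlk0 j).ne'
  have hL := auxCovLTE_diag (lam := lam) (k := k) (d := d) hQ hQ' hl hlk
  have hAd := auxCovAULTE_diag (lam := lam) (k := k) (d := d) hQ hQ' hl hlk
  have hsub : covLTE (Q * Matrix.diagonal lam * Qᵀ) k d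
        - covAULTE (Q * Matrix.diagonal lam * Qᵀ) k d
      = Q * Matrix.diagonal (fun j =>
          (lam j - d) ^ 2 * (lam j)⁻¹ * ((lam j + k)⁻¹) ^ 2
          - (1 - (k + d) ^ 2 * ((lam j + k)⁻¹) ^ 2) ^ 2 * (lam j)⁻¹) * Qᵀ := by
    rw [hL, hAd, auxCSub]
  have hpos : ∀ j, 0 < (lam j - d) ^ 2 * (lam j)⁻¹ * ((lam j + k)⁻¹) ^ 2
      - (1 - (k + d) ^ 2 * ((lam j + k)⁻¹) ^ 2) ^ 2 * (lam j)⁻¹ := by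
    intro j
    have hj := h j
    have hlj := hlam j
    have hlkj := hlk0 j
    have hkd : k + d < 0 := by nlinarith
    have hld : 0 < lam j - d := by linarith
    have key : (lam j - d) ^ 2 * (lam j)⁻¹ * ((lam j + k)⁻¹) ^ 2
          - (1 - (k + d) ^ 2 * ((lam j + k)⁻¹) ^ 2) ^ 2 * (lam j)⁻¹
        = ((lam j - d) ^ 2 * (-(k + d) * (2 * lam j + 3 * k + d)))
            / (lam j * (lam j + k) ^ 4) := by
      field_simp
      ring
    rw [key]
    exact div_pos (mul_pos (pow_pos hld 2) hj) (mul_pos hlj (pow_pos hlkj 4))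
  have hS1 : (covLTE (Q * Matrix.diagonal lam * Qᵀ) k d
      - covAULTE (Q * Matrix.diagonal lam * Qᵀ) k d).PosDef := by
    rw [hsub]
    exact auxPosDef_conj hQ (Matrix.PosDef.diagonal hpos)
  have hApd : (covLTE (Q * Matrix.diagonal lam * Qᵀ) k d
      - covAULTE (Q * Matrix.diagonal lam * Qᵀ) k d
      + Matrix.vecMulVec (biasLTE (Q * Matrix.diagonal lam * Qᵀ) k d β)
          (biasLTE (Q * Matrix.diagonal lam * Qᵀ) k d β)).PosDef :=
    hS1.add_posSemidef (auxPosSemidef_vecMulVec _)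
  have hgoal : mmse (covLTE (Q * Matrix.diagonal lam * Qᵀ) k d)
        (biasLTE (Q * Matrix.diagonal lam * Qᵀ) k d β)
      - mmse (covAULTE (Q * Matrix.diagonal lam * Qᵀ) k d)
        (biasAULTE (Q * Matrix.diagonal lam * Qᵀ) k d β)
      = (covLTE (Q * Matrix.diagonal lam * Qᵀ) k d
          - covAULTE (Q * Matrix.diagonal lam * Qᵀ) k d
          + Matrix.vecMulVec (biasLTE (Q * Matrix.diagonal lam * Qᵀ) k d β)
              (biasLTE (Q * Matrix.diagonal lam * Qᵀ) k d β))
        - Matrix.vecMulVec (biasAULTE (Q * Matrix.diagonal lam * Qᵀ) k d β)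
            (biasAULTE (Q * Matrix.diagonal lam * Qᵀ) k d β) := by
    unfold mmse
    abel
  rw [hgoal]
  exact auxPosDef_sub_vecMulVec_iff hApd _
end

section
/- Suppose that for every j = 1,…,p one has |d + k| < √2·(λ_j + k), that d ≠ −k, and that d ≠ λ_j for all j. Then the matrix S₂ = Cov_LTE − Cov_MAULTE is positive definite. -/
open Matrix


lemma scalar_pos (l k d : ℝ) (hl : 0 < l) (hk : 0 < k)
    (h : |d + k| < Real.sqrt 2 * (l + k)) (hdk : d ≠ -k) (hdl : d ≠ l) :
    0 < (l+k)⁻¹*(l-d)*l⁻¹*((l-d)*(l+k)⁻¹) -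
      ((1-(k+d)^2*((l+k)⁻¹)^2)*(1-(k+d)*(l+k)⁻¹)) * l⁻¹ *
      ((1-(k+d)^2*((l+k)⁻¹)^2)*(1-(k+d)*(l+k)⁻¹)) := by
  have ha : 0 < l + k := by linarith
  have ht : d + k ≠ 0 := fun hc => hdk (by linarith)
  have hld : l - d ≠ 0 := fun hc => hdl (by linarith)
  have ht2 : (d+k)^2 < 2*(l+k)^2 := by
    have h2 : |d+k|^2 < (Real.sqrt 2 * (l+k))^2 := by
      apply pow_lt_pow_left₀ h (abs_nonneg _) (by norm_num)
    rwa [sq_abs, mul_pow, Real.sq_sqrt (by norm_num : (2:ℝ) ≥ 0)] at h2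
  have key : (l+k)⁻¹*(l-d)*l⁻¹*((l-d)*(l+k)⁻¹) -
      ((1-(k+d)^2*((l+k)⁻¹)^2)*(1-(k+d)*(l+k)⁻¹)) * l⁻¹ *
      ((1-(k+d)^2*((l+k)⁻¹)^2)*(1-(k+d)*(l+k)⁻¹))
      = ((l-d)^2*(d+k)^2*(2*(l+k)^2-(d+k)^2)) / (l*(l+k)^6) := by
    field_simp
    ring
  rw [key]
  apply div_pos
  · exact mul_pos (mul_pos (pow_two_pos_of_ne_zero hld) (pow_two_pos_of_ne_zero ht))
      (by linarith)
  · exact mul_pos hl (pow_pos ha 6)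


lemma posdef_conj {p : ℕ} {Q : Matrix (Fin p) (Fin p) ℝ} (hQ : Q * Qᵀ = 1)
    {v : Fin p → ℝ} (hv : ∀ j, 0 < v j) : (Q * Matrix.diagonal v * Qᵀ).PosDef := by
  rw [Matrix.posDef_iff_dotProduct_mulVec]
  constructor
  · have := Matrix.isHermitian_mul_mul_conjTranspose Q
      (Matrix.isHermitian_diagonal_iff.mpr fun i => (IsSelfAdjoint.all _ : IsSelfAdjoint (v i)))
    simpa using this
  · intro x hx
    have hx' : Qᵀ *ᵥ x ≠ 0 := by
      intro hc
      apply hx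
      have h2 : Q *ᵥ (Qᵀ *ᵥ x) = 0 := by rw [hc, Matrix.mulVec_zero]
      rwa [Matrix.mulVec_mulVec, hQ, Matrix.one_mulVec] at h2
    have hd := (Matrix.PosDef.diagonal hv).dotProduct_mulVec_pos hx'
    have e : star x ⬝ᵥ ((Q * Matrix.diagonal v * Qᵀ) *ᵥ x)
        = star (Qᵀ *ᵥ x) ⬝ᵥ (Matrix.diagonal v *ᵥ (Qᵀ *ᵥ x)) := by
      simp [← Matrix.mulVec_mulVec, Matrix.dotProduct_mulVec, Matrix.mulVec_transpose,
        star_trivial]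
    rw [e]
    exact hd


section conj
variable {p : ℕ} {Q : Matrix (Fin p) (Fin p) ℝ}

lemma mconj_mul (hQ' : Qᵀ * Q = 1) (u v : Fin p → ℝ) :
    (Q * diagonal u * Qᵀ) * (Q * diagonal v * Qᵀ) = Q * diagonal (u * v) * Qᵀ := by
  simp only [Matrix.mul_assoc]
  rw [← Matrix.mul_assoc Qᵀ Q, hQ', Matrix.one_mul, ← Matrix.mul_assoc (diagonal u),
    Matrix.diagonal_mul_diagonal]
  rfl

lemma mconj_one (hQ : Q * Qᵀ = 1) : Q * diagonal (1 : Fin p → ℝ) * Qᵀ = 1 := by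
  have : diagonal (1 : Fin p → ℝ) = 1 := Matrix.diagonal_one
  rw [this, Matrix.mul_one, hQ]

lemma mconj_sub (u v : Fin p → ℝ) :
    (Q * diagonal u * Qᵀ) - (Q * diagonal v * Qᵀ) = Q * diagonal (u - v) * Qᵀ := by
  rw [show diagonal (u - v) = diagonal u - diagonal v from (Matrix.diagonal_sub u v).symm,
    Matrix.mul_sub, Matrix.sub_mul]

lemma mconj_add (u v : Fin p → ℝ) :
    (Q * diagonal u * Qᵀ) + (Q * diagonal v * Qᵀ) = Q * diagonal (u + v) * Qᵀ := by
  rw [show diagonal (u + v) = diagonal u + diagonal v from (Matrix.diagonal_add u v).symm,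
    Matrix.mul_add, Matrix.add_mul]

lemma mconj_smul (r : ℝ) (v : Fin p → ℝ) :
    r • (Q * diagonal v * Qᵀ) = Q * diagonal (r • v) * Qᵀ := by
  rw [show diagonal (r • v) = r • diagonal v from Matrix.diagonal_smul r v,
    Matrix.mul_smul, Matrix.smul_mul]

lemma mconj_smul_one (hQ : Q * Qᵀ = 1) (r : ℝ) :
    r • (1 : Matrix (Fin p) (Fin p) ℝ) = Q * diagonal (fun _ => r) * Qᵀ := by
  rw [← Matrix.smul_one_eq_diagonal, Matrix.mul_smul, Matrix.mul_one, Matrix.smul_mul, hQ]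

lemma mconj_inv (hQ : Q * Qᵀ = 1) (hQ' : Qᵀ * Q = 1) (v : Fin p → ℝ) (hv : ∀ j, v j ≠ 0) :
    (Q * diagonal v * Qᵀ)⁻¹ = Q * diagonal v⁻¹ * Qᵀ := by
  apply Matrix.inv_eq_right_inv
  rw [mconj_mul hQ',
    show v * v⁻¹ = (1 : Fin p → ℝ) from funext fun j => mul_inv_cancel₀ (hv j), mconj_one hQ]

lemma mconj_pow_two (hQ' : Qᵀ * Q = 1) (v : Fin p → ℝ) :
    (Q * diagonal v * Qᵀ) ^ 2 = Q * diagonal (v ^ 2) * Qᵀ := by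
  rw [pow_two, mconj_mul hQ', ← pow_two]

lemma mconj_transpose (v : Fin p → ℝ) :
    (Q * diagonal v * Qᵀ)ᵀ = Q * diagonal v * Qᵀ := by
  simp [Matrix.transpose_mul, Matrix.mul_assoc]

end conj



/-- If `|d + k| < √2·(λ_j + k)` for all `j`, `d ≠ −k`, and `d ≠ λ_j` for all
`j`, then `S₂ = Cov_LTE − Cov_MAULTE` is positive definite. -/

theorem covLTE_sub_covMAULTE_posDef (p : ℕ) (Q : Matrix (Fin p) (Fin p) ℝ) (hQ : Q * Qᵀ = 1)
    (lam : Fin p → ℝ) (hlam : ∀ j, 0 < lam j) (k d : ℝ) (hk : 0 < k)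
    (h : ∀ j, |d + k| < Real.sqrt 2 * (lam j + k))
    (hdk : d ≠ -k) (hdl : ∀ j, d ≠ lam j) :
    (covLTE (Q * Matrix.diagonal lam * Qᵀ) k d -
      covMAULTE (Q * Matrix.diagonal lam * Qᵀ) k d).PosDef := by
  have hQ' : Qᵀ * Q = 1 := mul_eq_one_comm.mp hQ
  have haj : ∀ j, ((lam + fun _ => k) : Fin p → ℝ) j ≠ 0 := fun j => by
    have := hlam j
    simp only [Pi.add_apply]
    intro hc
    linarith
  have hlj : ∀ j, lam j ≠ 0 := fun j => ne_of_gt (hlam j)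
  have hVk : Q * diagonal lam * Qᵀ + k • 1 = Q * diagonal (lam + fun _ => k) * Qᵀ := by
    rw [mconj_smul_one hQ k, mconj_add]
  have hVd : Q * diagonal lam * Qᵀ - d • 1 = Q * diagonal (lam - fun _ => d) * Qᵀ := by
    rw [mconj_smul_one hQ d, mconj_sub]
  have hVinv : (Q * diagonal lam * Qᵀ)⁻¹ = Q * diagonal lam⁻¹ * Qᵀ := mconj_inv hQ hQ' _ hlj
  have hAinv : (Q * diagonal (lam + fun _ => k) * Qᵀ)⁻¹
      = Q * diagonal (lam + fun _ => k)⁻¹ * Qᵀ := mconj_inv hQ hQ' _ haj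
  have hL : covLTE (Q * diagonal lam * Qᵀ) k d =
      Q * diagonal ((lam + fun _ => k)⁻¹ * (lam - fun _ => d) * lam⁻¹ *
        (lam - fun _ => d) * (lam + fun _ => k)⁻¹) * Qᵀ := by
    unfold covLTE
    rw [hVk, hVd, hVinv, hAinv, mconj_mul hQ', mconj_mul hQ', mconj_mul hQ', mconj_mul hQ']
  have hM : covMAULTE (Q * diagonal lam * Qᵀ) k d =
      Q * diagonal (((1 - (k + d) ^ 2 • ((lam + fun _ => k)⁻¹) ^ 2) *
        (1 - (k + d) • (lam + fun _ => k)⁻¹)) * lam⁻¹ *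
        ((1 - (k + d) ^ 2 • ((lam + fun _ => k)⁻¹) ^ 2) *
        (1 - (k + d) • (lam + fun _ => k)⁻¹))) * Qᵀ := by
    unfold covMAULTE mMAULTE
    rw [hVk, hAinv, mconj_pow_two hQ', mconj_smul, mconj_smul, ← mconj_one hQ,
      mconj_sub, mconj_sub, mconj_mul hQ', mconj_transpose, hVinv,
      mconj_mul hQ', mconj_mul hQ']
  rw [hL, hM, mconj_sub]
  apply posdef_conj hQ
  intro j
  have hs := scalar_pos (lam j) k d (hlam j) hk (h j) hdk (hdl j)
  simp only [Pi.sub_apply, Pi.mul_apply, Pi.inv_apply, Pi.add_apply, Pi.smul_apply,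
    Pi.one_apply, Pi.pow_apply, smul_eq_mul]
  ring_nf
  ring_nf at hs
  linarith [hs]
end

section
/- Suppose that for every j = 1,…,p one has |d + k| < √2·(λ_j + k), that d ≠ −k, that d ≠ λ_j for all j, and let β ∈ ℝ^p. Then MMSE_LTE − MMSE_MAULTE is positive definite if and only if b_MAULTEᵀ (S₂ + b_LTE b_LTEᵀ)⁻¹ b_MAULTE < 1, where S₂ = Cov_LTE − Cov_MAULTE. -/
open Matrix

section Aux
open Matrix
variable {n : Type*} [Fintype n] [DecidableEq n]

lemma vecMulVec_mulVec' (u v y : n → ℝ) : vecMulVec u v *ᵥ y = (v ⬝ᵥ y) • u := by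
  ext i
  simp only [vecMulVec, mulVec, dotProduct, Pi.smul_apply, smul_eq_mul, of_apply,
    Finset.mul_sum, Finset.sum_mul]
  apply Finset.sum_congr rfl; intro j _; ring

lemma dot_vecMulVec (x u v y : n → ℝ) : x ⬝ᵥ (vecMulVec u v *ᵥ y) = (x ⬝ᵥ u) * (v ⬝ᵥ y) := by
  rw [vecMulVec_mulVec', dotProduct_smul, smul_eq_mul]; ring

lemma vecMulVec_posSemidef (b : n → ℝ) : (vecMulVec b b).PosSemidef := by
  rw [posSemidef_iff_dotProduct_mulVec]
  constructor
  · ext i j; simp [vecMulVec, mul_comm, conjTranspose]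
  · intro x
    simp only [star_trivial]
    rw [dot_vecMulVec, dotProduct_comm]
    exact mul_self_nonneg _

lemma dot_symm_s11 {A : Matrix n n ℝ} (h : Aᵀ = A) (x y : n → ℝ) :
    x ⬝ᵥ A *ᵥ y = y ⬝ᵥ A *ᵥ x := by
  rw [dotProduct_mulVec, ← vecMul_transpose, h, dotProduct_comm]

lemma posDef_sub_vecMulVec_iff {A : Matrix n n ℝ} (hA : A.PosDef) (b : n → ℝ) :
    (A - vecMulVec b b).PosDef ↔ b ⬝ᵥ A⁻¹ *ᵥ b < 1 := by
  have hH : Aᵀ = A := by simpa [Matrix.IsHermitian] using hA.1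
  have hAinv : A⁻¹.PosDef := hA.inv
  have hdet : IsUnit A.det := (Matrix.isUnit_iff_isUnit_det A).mp hA.isUnit
  have hAAi : ∀ w : n → ℝ, A *ᵥ (A⁻¹ *ᵥ w) = w := by
    intro w; rw [mulVec_mulVec, mul_nonsing_inv _ hdet, one_mulVec]
  set s := b ⬝ᵥ A⁻¹ *ᵥ b with hs
  have hquad : ∀ x : n → ℝ, x ⬝ᵥ ((A - vecMulVec b b) *ᵥ x)
      = x ⬝ᵥ A *ᵥ x - (b ⬝ᵥ x) ^ 2 := by
    intro x
    rw [sub_mulVec, dotProduct_sub, dot_vecMulVec, dotProduct_comm x b, sq]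
  have hcs : ∀ x : n → ℝ, (b ⬝ᵥ x) ^ 2 ≤ s * (x ⬝ᵥ A *ᵥ x) := by
    intro x
    by_cases hb : b = 0
    · simp [hs, hb]
    · have hsp : 0 < s := by simpa [hs] using hAinv.dotProduct_mulVec_pos hb
      set c : n → ℝ := A⁻¹ *ᵥ b with hc
      set t : ℝ := (b ⬝ᵥ x) / s with ht
      have e1 : x ⬝ᵥ A *ᵥ c = b ⬝ᵥ x := by rw [hc, hAAi, dotProduct_comm]
      have e2 : c ⬝ᵥ A *ᵥ x = b ⬝ᵥ x := by rw [dot_symm_s11 hH, e1]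
      have e3 : c ⬝ᵥ A *ᵥ c = s := by rw [hc, hAAi, dotProduct_comm, hs]
      have h0 : 0 ≤ (x - t • c) ⬝ᵥ A *ᵥ (x - t • c) := by
        simpa using hA.posSemidef.dotProduct_mulVec_nonneg (x - t • c)
      have hexp : (x - t • c) ⬝ᵥ A *ᵥ (x - t • c)
          = x ⬝ᵥ A *ᵥ x - 2 * t * (b ⬝ᵥ x) + t ^ 2 * s := by
        rw [mulVec_sub, mulVec_smul, dotProduct_sub, sub_dotProduct, sub_dotProduct,
          smul_dotProduct, dotProduct_smul, smul_dotProduct, dotProduct_smul, e1, e2, e3]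
        simp only [smul_eq_mul]; ring
      rw [hexp] at h0
      have hts : t * s = b ⬝ᵥ x := div_mul_cancel₀ _ hsp.ne'
      nlinarith [h0, hsp, hts]
  constructor
  · intro hPD
    by_cases hb : b = 0
    · simp [hs, hb]
    · have hxne : A⁻¹ *ᵥ b ≠ 0 := by
        intro hcon
        exact hb (by rw [← hAAi b, hcon, mulVec_zero])
      have hpos := hPD.dotProduct_mulVec_pos hxne
      simp only [star_trivial] at hpos
      rw [hquad] at hpos
      have e1 : (A⁻¹ *ᵥ b) ⬝ᵥ A *ᵥ (A⁻¹ *ᵥ b) = s := by rw [hAAi, dotProduct_comm, hs]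
      have e2 : b ⬝ᵥ (A⁻¹ *ᵥ b) = s := hs.symm
      rw [e1, e2] at hpos
      have hsp : 0 < s := by simpa [hs] using hAinv.dotProduct_mulVec_pos hb
      nlinarith [hpos, hsp]
  · intro hlt
    refine Matrix.PosDef.of_dotProduct_mulVec_pos (hA.1.sub (vecMulVec_posSemidef b).1) fun x hx => ?_
    simp only [star_trivial]
    rw [hquad]
    have hq : 0 < x ⬝ᵥ A *ᵥ x := by simpa using hA.dotProduct_mulVec_pos hx
    nlinarith [hcs x, hq, hlt]

end Aux

noncomputable def conjDiag {p : ℕ} (Q : Matrix (Fin p) (Fin p) ℝ) (μ : Fin p → ℝ) :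
    Matrix (Fin p) (Fin p) ℝ :=
  Q * Matrix.diagonal μ * Qᵀ

namespace conjDiag
open Matrix
variable {p : ℕ} {Q : Matrix (Fin p) (Fin p) ℝ}

lemma mul (hQ : Q * Qᵀ = 1) (μ ν : Fin p → ℝ) :
    conjDiag Q μ * conjDiag Q ν = conjDiag Q (fun j => μ j * ν j) := by
  have tQ : Qᵀ * Q = 1 := mul_eq_one_comm.mp hQ
  unfold conjDiag
  simp only [Matrix.mul_assoc]
  rw [← Matrix.mul_assoc Qᵀ Q, tQ, Matrix.one_mul, ← Matrix.mul_assoc (diagonal μ),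
    diagonal_mul_diagonal]

lemma add (μ ν : Fin p → ℝ) :
    conjDiag Q μ + conjDiag Q ν = conjDiag Q (fun j => μ j + ν j) := by
  unfold conjDiag
  rw [← Matrix.add_mul, ← Matrix.mul_add, diagonal_add]

lemma sub (μ ν : Fin p → ℝ) :
    conjDiag Q μ - conjDiag Q ν = conjDiag Q (fun j => μ j - ν j) := by
  unfold conjDiag
  rw [← Matrix.sub_mul, ← Matrix.mul_sub, diagonal_sub]

lemma one (hQ : Q * Qᵀ = 1) : conjDiag Q (fun _ => 1) = 1 := by
  unfold conjDiag
  rw [show (diagonal fun _ : Fin p => (1:ℝ)) = 1 from diagonal_one, Matrix.mul_one, hQ]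

lemma smul (c : ℝ) (μ : Fin p → ℝ) :
    c • conjDiag Q μ = conjDiag Q (fun j => c * μ j) := by
  unfold conjDiag
  have : (diagonal fun j => c * μ j) = c • diagonal μ := by
    rw [← diagonal_smul]; rfl
  rw [this, Matrix.mul_smul, Matrix.smul_mul]

lemma transpose (μ : Fin p → ℝ) : (conjDiag Q μ)ᵀ = conjDiag Q μ := by
  unfold conjDiag
  rw [Matrix.transpose_mul, Matrix.transpose_mul, transpose_transpose, diagonal_transpose,
    Matrix.mul_assoc]

lemma sq' (hQ : Q * Qᵀ = 1) (μ : Fin p → ℝ) :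
    (conjDiag Q μ) ^ 2 = conjDiag Q (fun j => μ j * μ j) := by
  rw [pow_two, mul hQ]

lemma inv (hQ : Q * Qᵀ = 1) {μ : Fin p → ℝ} (h : ∀ j, μ j ≠ 0) :
    (conjDiag Q μ)⁻¹ = conjDiag Q (fun j => (μ j)⁻¹) := by
  apply inv_eq_right_inv
  rw [mul hQ]
  rw [show (fun j => μ j * (μ j)⁻¹) = fun _ : Fin p => (1:ℝ) from
    funext fun j => mul_inv_cancel₀ (h j)]
  exact one hQ

lemma posDef (hQ : Q * Qᵀ = 1) {μ : Fin p → ℝ} (h : ∀ j, 0 < μ j) :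
    (conjDiag Q μ).PosDef := by
  have tQ : Qᵀ * Q = 1 := mul_eq_one_comm.mp hQ
  have hD : (diagonal μ).PosDef := posDef_diagonal_iff.mpr h
  rw [posDef_iff_dotProduct_mulVec]
  constructor
  · have hDh : (diagonal μ)ᴴ = diagonal μ := hD.1
    show (conjDiag Q μ)ᴴ = conjDiag Q μ
    unfold conjDiag
    rw [conjTranspose_mul, conjTranspose_mul, hDh]
    rw [show (Qᵀ)ᴴ = Q from by ext i j; simp [conjTranspose],
      show Qᴴ = Qᵀ from by ext i j; simp [conjTranspose]]
    rw [Matrix.mul_assoc]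
  · intro x hx
    have hQx : Qᵀ *ᵥ x ≠ 0 := by
      intro hcon
      apply hx
      have : Q *ᵥ (Qᵀ *ᵥ x) = x := by rw [mulVec_mulVec, hQ, one_mulVec]
      rw [← this, hcon, mulVec_zero]
    have := hD.dotProduct_mulVec_pos hQx
    simp only [star_trivial] at this ⊢
    unfold conjDiag
    rw [← Matrix.mulVec_mulVec, ← Matrix.mulVec_mulVec, dotProduct_mulVec x Q, ← mulVec_transpose]
    exact this

end conjDiag
/-- MMSE comparison of LTE and MAULTE. -/
theorem mmseLTE_sub_mmseMAULTE_posDef_iff (p : ℕ) (Q : Matrix (Fin p) (Fin p) ℝ)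
    (hQ : Q * Qᵀ = 1) (lam : Fin p → ℝ) (hlam : ∀ j, 0 < lam j) (k d : ℝ) (hk : 0 < k)
    (h : ∀ j, |d + k| < Real.sqrt 2 * (lam j + k))
    (hdk : d ≠ -k) (hdl : ∀ j, d ≠ lam j) (β : Fin p → ℝ) :
    (mmse (covLTE (Q * Matrix.diagonal lam * Qᵀ) k d)
        (biasLTE (Q * Matrix.diagonal lam * Qᵀ) k d β) -
      mmse (covMAULTE (Q * Matrix.diagonal lam * Qᵀ) k d)
        (biasMAULTE (Q * Matrix.diagonal lam * Qᵀ) k d β)).PosDef ↔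
      biasMAULTE (Q * Matrix.diagonal lam * Qᵀ) k d β ⬝ᵥ
        ((covLTE (Q * Matrix.diagonal lam * Qᵀ) k d -
            covMAULTE (Q * Matrix.diagonal lam * Qᵀ) k d) +
          Matrix.vecMulVec (biasLTE (Q * Matrix.diagonal lam * Qᵀ) k d β)
            (biasLTE (Q * Matrix.diagonal lam * Qᵀ) k d β))⁻¹ *ᵥ
        biasMAULTE (Q * Matrix.diagonal lam * Qᵀ) k d β < 1 := by
  have hVdef : Q * Matrix.diagonal lam * Qᵀ = conjDiag Q lam := rfl
  have hcne : ∀ j, lam j + k ≠ 0 := fun j => by have := hlam j; positivity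
  have hlne : ∀ j, lam j ≠ 0 := fun j => (hlam j).ne'
  have h1 : conjDiag Q lam + k • (1 : Matrix (Fin p) (Fin p) ℝ)
      = conjDiag Q (fun j => lam j + k) := by
    rw [← conjDiag.one hQ, conjDiag.smul, conjDiag.add]
    exact congrArg (conjDiag Q) (funext fun j => by ring)
  have hX : (conjDiag Q lam + k • (1 : Matrix (Fin p) (Fin p) ℝ))⁻¹
      = conjDiag Q (fun j => (lam j + k)⁻¹) := by
    rw [h1, conjDiag.inv hQ hcne]
  have hE : conjDiag Q lam - d • (1 : Matrix (Fin p) (Fin p) ℝ)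
      = conjDiag Q (fun j => lam j - d) := by
    rw [← conjDiag.one hQ, conjDiag.smul, conjDiag.sub]
    exact congrArg (conjDiag Q) (funext fun j => by ring)
  have hVi : (conjDiag Q lam)⁻¹ = conjDiag Q (fun j => (lam j)⁻¹) :=
    conjDiag.inv hQ hlne
  have hcovL : covLTE (Q * Matrix.diagonal lam * Qᵀ) k d
      = conjDiag Q (fun j =>
          (lam j + k)⁻¹ * (lam j - d) * (lam j)⁻¹ * (lam j - d) * (lam j + k)⁻¹) := by
    unfold covLTE
    rw [hVdef, hX, hE, hVi, conjDiag.mul hQ, conjDiag.mul hQ, conjDiag.mul hQ, conjDiag.mul hQ]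
  have hm : mMAULTE (Q * Matrix.diagonal lam * Qᵀ) k d
      = conjDiag Q (fun j =>
          (1 - (k + d) ^ 2 * ((lam j + k)⁻¹ * (lam j + k)⁻¹)) * (1 - (k + d) * (lam j + k)⁻¹)) := by
    unfold mMAULTE
    rw [hVdef, hX, conjDiag.sq' hQ, conjDiag.smul, conjDiag.smul, ← conjDiag.one hQ,
      conjDiag.sub, conjDiag.sub, conjDiag.mul hQ]
  have hcovM : covMAULTE (Q * Matrix.diagonal lam * Qᵀ) k d
      = conjDiag Q (fun j =>
          ((1 - (k + d) ^ 2 * ((lam j + k)⁻¹ * (lam j + k)⁻¹)) * (1 - (k + d) * (lam j + k)⁻¹))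
            * (lam j)⁻¹ *
          ((1 - (k + d) ^ 2 * ((lam j + k)⁻¹ * (lam j + k)⁻¹)) * (1 - (k + d) * (lam j + k)⁻¹))) := by
    unfold covMAULTE
    rw [hm, hVdef, hVi, conjDiag.transpose, conjDiag.mul hQ, conjDiag.mul hQ]
  have hS : covLTE (Q * Matrix.diagonal lam * Qᵀ) k d - covMAULTE (Q * Matrix.diagonal lam * Qᵀ) k d
      = conjDiag Q (fun j =>
          ((lam j - d) * (lam j + k)⁻¹) * ((lam j - d) * (lam j + k)⁻¹) * (lam j)⁻¹ *
            (((k + d) * (lam j + k)⁻¹) * ((k + d) * (lam j + k)⁻¹)) *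
            (2 - ((k + d) * (lam j + k)⁻¹) * ((k + d) * (lam j + k)⁻¹))) := by
    rw [hcovL, hcovM, conjDiag.sub]
    refine congrArg (conjDiag Q) (funext fun j => ?_)
    have h1 : lam j + k ≠ 0 := hcne j
    have h2 : lam j ≠ 0 := hlne j
    field_simp
    ring
  have hs : ∀ j, 0 < ((lam j - d) * (lam j + k)⁻¹) * ((lam j - d) * (lam j + k)⁻¹) * (lam j)⁻¹ *
      (((k + d) * (lam j + k)⁻¹) * ((k + d) * (lam j + k)⁻¹)) *
      (2 - ((k + d) * (lam j + k)⁻¹) * ((k + d) * (lam j + k)⁻¹)) := by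
    intro j
    have hc : 0 < lam j + k := by have := hlam j; linarith
    have hT : 0 < (lam j + k)⁻¹ := inv_pos.mpr hc
    have hEne : lam j - d ≠ 0 := sub_ne_zero.mpr (Ne.symm (hdl j))
    have hane : k + d ≠ 0 := fun hc0 => hdk (by linarith)
    have habs : |d + k| < Real.sqrt 2 * (lam j + k) := h j
    have h2' : (k + d) * (k + d) < 2 * ((lam j + k) * (lam j + k)) := by
      have hmm : |d + k| * |d + k| < (Real.sqrt 2 * (lam j + k)) * (Real.sqrt 2 * (lam j + k)) :=
        mul_self_lt_mul_self (abs_nonneg _) habs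
      have hsq : Real.sqrt 2 * Real.sqrt 2 = 2 := Real.mul_self_sqrt (by norm_num)
      rw [abs_mul_abs_self] at hmm
      nlinarith [hmm, hsq]
    have hbound : ((k + d) * (lam j + k)⁻¹) * ((k + d) * (lam j + k)⁻¹) < 2 := by
      have hct : (lam j + k) * (lam j + k)⁻¹ = 1 := mul_inv_cancel₀ hc.ne'
      nlinarith [h2', hct, mul_pos hT hT]
    have p1 : 0 < ((lam j - d) * (lam j + k)⁻¹) * ((lam j - d) * (lam j + k)⁻¹) :=
      mul_self_pos.mpr (mul_ne_zero hEne hT.ne')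
    have p2 : 0 < ((k + d) * (lam j + k)⁻¹) * ((k + d) * (lam j + k)⁻¹) :=
      mul_self_pos.mpr (mul_ne_zero hane hT.ne')
    have p3 : 0 < (lam j)⁻¹ := inv_pos.mpr (hlam j)
    exact mul_pos (mul_pos (mul_pos p1 p3) p2) (by linarith)
  have hA : ((covLTE (Q * Matrix.diagonal lam * Qᵀ) k d -
        covMAULTE (Q * Matrix.diagonal lam * Qᵀ) k d) +
      Matrix.vecMulVec (biasLTE (Q * Matrix.diagonal lam * Qᵀ) k d β)
        (biasLTE (Q * Matrix.diagonal lam * Qᵀ) k d β)).PosDef := by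
    rw [hS]
    exact (conjDiag.posDef hQ hs).add_posSemidef (vecMulVec_posSemidef _)
  have hshape : mmse (covLTE (Q * Matrix.diagonal lam * Qᵀ) k d)
        (biasLTE (Q * Matrix.diagonal lam * Qᵀ) k d β) -
      mmse (covMAULTE (Q * Matrix.diagonal lam * Qᵀ) k d)
        (biasMAULTE (Q * Matrix.diagonal lam * Qᵀ) k d β)
      = ((covLTE (Q * Matrix.diagonal lam * Qᵀ) k d -
          covMAULTE (Q * Matrix.diagonal lam * Qᵀ) k d) +
        Matrix.vecMulVec (biasLTE (Q * Matrix.diagonal lam * Qᵀ) k d β)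
          (biasLTE (Q * Matrix.diagonal lam * Qᵀ) k d β)) -
        Matrix.vecMulVec (biasMAULTE (Q * Matrix.diagonal lam * Qᵀ) k d β)
          (biasMAULTE (Q * Matrix.diagonal lam * Qᵀ) k d β) := by
    unfold mmse
    abel
  rw [hshape]
  exact posDef_sub_vecMulVec_iff hA _
end

section
/- Suppose (k + d)(2λ_j + k − d) > 0 and d ≠ λ_j for all j = 1,…,p. Then the matrix S₃ = Cov_AULTE − Cov_MAULTE is positive definite. -/
open Matrix

section aux
variable {p : ℕ} (Q : Matrix (Fin p) (Fin p) ℝ)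

lemma conj_mul_conj (hQ' : Qᵀ * Q = 1) (f g : Fin p → ℝ) :
    (Q * diagonal f * Qᵀ) * (Q * diagonal g * Qᵀ)
      = Q * diagonal (fun j => f j * g j) * Qᵀ := by
  simp only [Matrix.mul_assoc]
  rw [← Matrix.mul_assoc Qᵀ Q, hQ', Matrix.one_mul,
    ← Matrix.mul_assoc (diagonal f) (diagonal g), Matrix.diagonal_mul_diagonal]

lemma conj_inv' (hQ : Q * Qᵀ = 1) (hQ' : Qᵀ * Q = 1) (f : Fin p → ℝ) (hf : ∀ j, f j ≠ 0) :
    (Q * diagonal f * Qᵀ)⁻¹ = Q * diagonal (fun j => (f j)⁻¹) * Qᵀ := by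
  apply Matrix.inv_eq_right_inv
  rw [conj_mul_conj Q hQ']
  have h1 : (fun j => f j * (f j)⁻¹) = fun _ => (1:ℝ) :=
    funext fun j => mul_inv_cancel₀ (hf j)
  rw [h1, Matrix.diagonal_one, Matrix.mul_one, hQ]

lemma one_eq_conj (hQ : Q * Qᵀ = 1) :
    (1 : Matrix (Fin p) (Fin p) ℝ) = Q * diagonal (fun _ => 1) * Qᵀ := by
  rw [Matrix.diagonal_one, Matrix.mul_one, hQ]

lemma smul_conj (r : ℝ) (f : Fin p → ℝ) :
    r • (Q * diagonal f * Qᵀ) = Q * diagonal (fun j => r * f j) * Qᵀ := by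
  have h1 : diagonal (fun j => r * f j) = r • diagonal f := by
    rw [← Matrix.diagonal_smul]; rfl
  rw [h1, Matrix.mul_smul, Matrix.smul_mul]

lemma add_conj (f g : Fin p → ℝ) :
    (Q * diagonal f * Qᵀ) + (Q * diagonal g * Qᵀ)
      = Q * diagonal (fun j => f j + g j) * Qᵀ := by
  rw [show diagonal (fun j => f j + g j) = diagonal f + diagonal g from
    (Matrix.diagonal_add f g).symm, Matrix.mul_add, Matrix.add_mul]

lemma sub_conj (f g : Fin p → ℝ) :
    (Q * diagonal f * Qᵀ) - (Q * diagonal g * Qᵀ)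
      = Q * diagonal (fun j => f j - g j) * Qᵀ := by
  rw [show diagonal (fun j => f j - g j) = diagonal f - diagonal g from
    (Matrix.diagonal_sub f g).symm, Matrix.mul_sub, Matrix.sub_mul]

lemma transpose_conj (f : Fin p → ℝ) :
    (Q * diagonal f * Qᵀ)ᵀ = Q * diagonal f * Qᵀ := by
  rw [Matrix.transpose_mul, Matrix.transpose_mul, Matrix.transpose_transpose,
    Matrix.diagonal_transpose, Matrix.mul_assoc]

lemma conj_posDef (hQ : Q * Qᵀ = 1) {g : Fin p → ℝ} (hg : ∀ j, 0 < g j) :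
    (Q * diagonal g * Qᵀ).PosDef := by
  rw [Matrix.posDef_iff_dotProduct_mulVec]
  constructor
  · rw [Matrix.IsHermitian, conjTranspose_eq_transpose_of_trivial, transpose_conj]
  · intro x hx
    have hx' : Qᵀ *ᵥ x ≠ 0 := by
      intro h0
      apply hx
      have h1 := congrArg (fun y => Q *ᵥ y) h0
      simpa [Matrix.mulVec_mulVec, hQ] using h1
    have hD := Matrix.PosDef.diagonal hg
    have h2 := hD.dotProduct_mulVec_pos hx'
    convert h2 using 1
    rw [Matrix.mul_assoc, ← Matrix.mulVec_mulVec, Matrix.dotProduct_mulVec,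
      ← Matrix.mulVec_transpose, ← Matrix.mulVec_mulVec]
    simp [star_trivial]

end aux

/-- If `(k + d)(2λ_j + k − d) > 0` and `d ≠ λ_j` for all `j`, then
`S₃ = Cov_AULTE − Cov_MAULTE` is positive definite. -/
theorem covAULTE_sub_covMAULTE_posDef (p : ℕ) (Q : Matrix (Fin p) (Fin p) ℝ) (hQ : Q * Qᵀ = 1)
    (lam : Fin p → ℝ) (hlam : ∀ j, 0 < lam j) (k d : ℝ) (hk : 0 < k)
    (h : ∀ j, (k + d) * (2 * lam j + k - d) > 0) (hdl : ∀ j, d ≠ lam j) :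
    (covAULTE (Q * Matrix.diagonal lam * Qᵀ) k d -
      covMAULTE (Q * Matrix.diagonal lam * Qᵀ) k d).PosDef := by
  have hQ' : Qᵀ * Q = 1 := mul_eq_one_comm.mp hQ
  have hek : ∀ j, lam j + k ≠ 0 := fun j => by
    have := hlam j; intro h0; linarith
  have hlne : ∀ j, lam j ≠ 0 := fun j => (hlam j).ne'
  have hVk : Q * diagonal lam * Qᵀ + k • 1
      = Q * diagonal (fun j => lam j + k) * Qᵀ := by
    rw [one_eq_conj Q hQ, smul_conj, add_conj Q]
    norm_num
  have hA : (Q * diagonal lam * Qᵀ + k • 1)⁻¹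
      = Q * diagonal (fun j => (lam j + k)⁻¹) * Qᵀ := by
    rw [hVk, conj_inv' Q hQ hQ' _ hek]
  have hA2 : ((Q * diagonal lam * Qᵀ + k • 1)⁻¹) ^ 2
      = Q * diagonal (fun j => (lam j + k)⁻¹ * (lam j + k)⁻¹) * Qᵀ := by
    rw [pow_two, hA, conj_mul_conj Q hQ']
  have hVi : (Q * diagonal lam * Qᵀ)⁻¹
      = Q * diagonal (fun j => (lam j)⁻¹) * Qᵀ :=
    conj_inv' Q hQ hQ' _ hlne
  have hT : 1 - (k + d) ^ 2 • ((Q * diagonal lam * Qᵀ + k • 1)⁻¹) ^ 2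
      = Q * diagonal (fun j => 1 - (k + d) ^ 2 * ((lam j + k)⁻¹ * (lam j + k)⁻¹)) * Qᵀ := by
    rw [hA2, smul_conj, one_eq_conj Q hQ, sub_conj]
  have hS : 1 - (k + d) • (Q * diagonal lam * Qᵀ + k • 1)⁻¹
      = Q * diagonal (fun j => 1 - (k + d) * (lam j + k)⁻¹) * Qᵀ := by
    rw [hA, smul_conj, one_eq_conj Q hQ, sub_conj]
  have hCA : covAULTE (Q * diagonal lam * Qᵀ) k d
      = Q * diagonal (fun j =>
          (1 - (k + d) ^ 2 * ((lam j + k)⁻¹ * (lam j + k)⁻¹)) * (lam j)⁻¹ *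
          (1 - (k + d) ^ 2 * ((lam j + k)⁻¹ * (lam j + k)⁻¹))) * Qᵀ := by
    rw [covAULTE, hT, hVi, conj_mul_conj Q hQ', conj_mul_conj Q hQ']
  have hM : mMAULTE (Q * diagonal lam * Qᵀ) k d
      = Q * diagonal (fun j =>
          (1 - (k + d) ^ 2 * ((lam j + k)⁻¹ * (lam j + k)⁻¹)) *
          (1 - (k + d) * (lam j + k)⁻¹)) * Qᵀ := by
    rw [mMAULTE, hT, hS, conj_mul_conj Q hQ']
  have hCM : covMAULTE (Q * diagonal lam * Qᵀ) k d
      = Q * diagonal (fun j =>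
          ((1 - (k + d) ^ 2 * ((lam j + k)⁻¹ * (lam j + k)⁻¹)) *
            (1 - (k + d) * (lam j + k)⁻¹)) * (lam j)⁻¹ *
          ((1 - (k + d) ^ 2 * ((lam j + k)⁻¹ * (lam j + k)⁻¹)) *
            (1 - (k + d) * (lam j + k)⁻¹))) * Qᵀ := by
    rw [covMAULTE, hM, hVi, transpose_conj, conj_mul_conj Q hQ', conj_mul_conj Q hQ']
  rw [hCA, hCM, sub_conj]
  apply conj_posDef Q hQ
  intro j
  set L := lam j with hL
  set A := (L + k)⁻¹ with hAdef
  have hLpos : 0 < L := hlam j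
  have hLk : 0 < L + k := by positivity
  have hAne : A ≠ 0 := inv_ne_zero hLk.ne'
  have ht0 : 1 - (k + d) ^ 2 * (A * A) ≠ 0 := by
    have heq : 1 - (k + d) ^ 2 * (A * A) = (L - d) * (L + 2 * k + d) * A ^ 2 := by
      rw [hAdef]
      field_simp
      ring
    rw [heq]
    have h1 : L - d ≠ 0 := sub_ne_zero.mpr (hdl j).symm
    have h2 : L + 2 * k + d ≠ 0 := by
      intro h0
      nlinarith [h j, sq_nonneg (L + k)]
    exact mul_ne_zero (mul_ne_zero h1 h2) (pow_ne_zero 2 hAne)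
  have hkey : 0 < (k + d) * A * (2 - (k + d) * A) := by
    have heq : (k + d) * A * (2 - (k + d) * A) = (k + d) * (2 * L + k - d) * A ^ 2 := by
      rw [hAdef]
      field_simp
      ring
    rw [heq]
    exact mul_pos (h j) (pow_pos (inv_pos.mpr hLk) 2)
  have hgoal : (1 - (k + d) ^ 2 * (A * A)) * L⁻¹ * (1 - (k + d) ^ 2 * (A * A)) -
      (1 - (k + d) ^ 2 * (A * A)) * (1 - (k + d) * A) * L⁻¹ *
        ((1 - (k + d) ^ 2 * (A * A)) * (1 - (k + d) * A))
      = (1 - (k + d) ^ 2 * (A * A)) ^ 2 * L⁻¹ * ((k + d) * A * (2 - (k + d) * A)) := by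
    ring
  show 0 < _
  rw [hgoal]
  exact mul_pos (mul_pos (pow_two_pos_of_ne_zero ht0) (inv_pos.mpr hLpos)) hkey
end

section
/- Suppose (k + d)(2λ_j + k − d) > 0 and d ≠ λ_j for all j = 1,…,p, and let β ∈ ℝ^p. Then MMSE_AULTE − MMSE_MAULTE is positive definite if and only if b_MAULTEᵀ (S₃ + b_AULTE b_AULTEᵀ)⁻¹ b_MAULTE < 1, where S₃ = Cov_AULTE − Cov_MAULTE. -/
open Matrix

namespace BellAux

variable {p : ℕ}

lemma mulVec_vecMulVec (w v x : Fin p → ℝ) :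
    vecMulVec w v *ᵥ x = (v ⬝ᵥ x) • w := by
  ext i
  simp only [Matrix.mulVec, Matrix.vecMulVec_apply, dotProduct, Pi.smul_apply, smul_eq_mul,
    Finset.sum_mul]
  exact Finset.sum_congr rfl fun j _ => by ring

lemma isHermitian_vecMulVec (b : Fin p → ℝ) : (vecMulVec b b).IsHermitian := by
  show (vecMulVec b b)ᴴ = vecMulVec b b
  ext i j
  simp [Matrix.conjTranspose_apply, Matrix.vecMulVec_apply, mul_comm]

lemma posSemidef_vecMulVec (b : Fin p → ℝ) : (vecMulVec b b).PosSemidef := by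
  refine .of_dotProduct_mulVec_nonneg (isHermitian_vecMulVec b) fun x => ?_
  rw [star_trivial, mulVec_vecMulVec, dotProduct_smul, smul_eq_mul, dotProduct_comm]
  exact mul_self_nonneg _

/-- The key rank-one update criterion. -/
lemma posDef_sub_vecMulVec_iff {N : Matrix (Fin p) (Fin p) ℝ} (hN : N.PosDef) (b : Fin p → ℝ) :
    (N - vecMulVec b b).PosDef ↔ b ⬝ᵥ N⁻¹ *ᵥ b < 1 := by
  have hdet : IsUnit N.det := (Matrix.isUnit_iff_isUnit_det N).mp hN.isUnit
  have hNi : N⁻¹.PosDef := hN.inv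
  have hNb : N *ᵥ (N⁻¹ *ᵥ b) = b := by
    rw [Matrix.mulVec_mulVec, Matrix.mul_nonsing_inv _ hdet, Matrix.one_mulVec]
  have hNsymm : Nᵀ = N := by
    have h1 := hN.isHermitian
    ext i j
    have h2 := congrFun (congrFun h1 i) j
    simpa [Matrix.conjTranspose_apply] using h2
  have hdot : ∀ x : Fin p → ℝ, (N⁻¹ *ᵥ b) ⬝ᵥ (N *ᵥ x) = b ⬝ᵥ x := by
    intro x
    rw [Matrix.dotProduct_mulVec, ← Matrix.mulVec_transpose, hNsymm, hNb]
  have htcomm : (N⁻¹ *ᵥ b) ⬝ᵥ b = b ⬝ᵥ N⁻¹ *ᵥ b := dotProduct_comm _ _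
  have hq : ∀ x : Fin p → ℝ,
      star x ⬝ᵥ ((N - vecMulVec b b) *ᵥ x) = x ⬝ᵥ (N *ᵥ x) - (b ⬝ᵥ x) ^ 2 := by
    intro x
    rw [star_trivial, Matrix.sub_mulVec, dotProduct_sub, mulVec_vecMulVec, dotProduct_smul,
      smul_eq_mul, dotProduct_comm x b]
    ring
  constructor
  · intro hP
    by_cases hb : b = 0
    · simp [hb]
    · have hx : (N⁻¹ *ᵥ b) ≠ 0 := by
        intro h0
        exact hb (by rw [← hNb, h0, Matrix.mulVec_zero])
      have hpos := hP.dotProduct_mulVec_pos hx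
      rw [hq, hNb, htcomm] at hpos
      have htpos : 0 < b ⬝ᵥ N⁻¹ *ᵥ b := by simpa using hNi.dotProduct_mulVec_pos hb
      nlinarith [hpos, htpos]
  · intro ht1
    refine .of_dotProduct_mulVec_pos (hN.isHermitian.sub (isHermitian_vecMulVec b)) fun x hx => ?_
    rw [hq]
    have hxN : 0 < x ⬝ᵥ (N *ᵥ x) := by simpa using hN.dotProduct_mulVec_pos hx
    by_cases hb : b = 0
    · simpa [hb] using hxN
    · have htpos : 0 < b ⬝ᵥ N⁻¹ *ᵥ b := by simpa using hNi.dotProduct_mulVec_pos hb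
      have h0 := hN.posSemidef.dotProduct_mulVec_nonneg ((b ⬝ᵥ N⁻¹ *ᵥ b) • x - (b ⬝ᵥ x) • (N⁻¹ *ᵥ b))
      simp only [star_trivial, Matrix.mulVec_sub, Matrix.mulVec_smul, hNb, dotProduct_sub,
        sub_dotProduct, dotProduct_smul, smul_dotProduct, smul_eq_mul, hdot, htcomm,
        dotProduct_comm x b] at h0
      have key2 : (b ⬝ᵥ x) * (b ⬝ᵥ x) ≤ (b ⬝ᵥ N⁻¹ *ᵥ b) * (x ⬝ᵥ N *ᵥ x) := by
        nlinarith [h0, htpos]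
      nlinarith [key2, htpos, hxN, ht1, mul_pos (sub_pos.mpr ht1) hxN]

variable {Q : Matrix (Fin p) (Fin p) ℝ}

lemma conj_mul (hQ' : Qᵀ * Q = 1) (g h : Fin p → ℝ) :
    (Q * diagonal g * Qᵀ) * (Q * diagonal h * Qᵀ) = Q * diagonal (fun j => g j * h j) * Qᵀ := by
  calc (Q * diagonal g * Qᵀ) * (Q * diagonal h * Qᵀ)
      = Q * (diagonal g * ((Qᵀ * Q) * (diagonal h * Qᵀ))) := by
        simp only [Matrix.mul_assoc]
    _ = Q * (diagonal g * diagonal h * Qᵀ) := by rw [hQ', Matrix.one_mul, Matrix.mul_assoc]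
    _ = Q * diagonal (fun j => g j * h j) * Qᵀ := by
        rw [Matrix.diagonal_mul_diagonal, Matrix.mul_assoc]

lemma conj_add (g h : Fin p → ℝ) :
    (Q * diagonal g * Qᵀ) + (Q * diagonal h * Qᵀ) = Q * diagonal (fun j => g j + h j) * Qᵀ := by
  rw [← Matrix.add_mul, ← Matrix.mul_add, Matrix.diagonal_add]

lemma conj_sub (g h : Fin p → ℝ) :
    (Q * diagonal g * Qᵀ) - (Q * diagonal h * Qᵀ) = Q * diagonal (fun j => g j - h j) * Qᵀ := by
  rw [← Matrix.sub_mul, ← Matrix.mul_sub, Matrix.diagonal_sub]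

lemma conj_smul (r : ℝ) (g : Fin p → ℝ) :
    r • (Q * diagonal g * Qᵀ) = Q * diagonal (fun j => r * g j) * Qᵀ := by
  have : (fun j => r * g j) = r • g := by funext j; simp
  rw [this, Matrix.diagonal_smul, Matrix.mul_smul, Matrix.smul_mul]

lemma conj_one (hQ : Q * Qᵀ = 1) :
    Q * diagonal (fun _ => (1 : ℝ)) * Qᵀ = 1 := by
  rw [show (diagonal (fun _ => (1:ℝ)) : Matrix (Fin p) (Fin p) ℝ) = 1 from Matrix.diagonal_one,
    Matrix.mul_one, hQ]

lemma conj_transpose (g : Fin p → ℝ) :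
    (Q * diagonal g * Qᵀ)ᵀ = Q * diagonal g * Qᵀ := by
  rw [Matrix.transpose_mul, Matrix.transpose_mul, Matrix.transpose_transpose,
    Matrix.diagonal_transpose, Matrix.mul_assoc]

lemma conj_inv (hQ : Q * Qᵀ = 1) (hQ' : Qᵀ * Q = 1) {g : Fin p → ℝ} (hg : ∀ j, g j ≠ 0) :
    (Q * diagonal g * Qᵀ)⁻¹ = Q * diagonal (fun j => (g j)⁻¹) * Qᵀ := by
  apply Matrix.inv_eq_right_inv
  rw [conj_mul hQ', show (fun j => g j * (g j)⁻¹) = fun _ => (1:ℝ) from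
    funext fun j => mul_inv_cancel₀ (hg j), conj_one hQ]

lemma posDef_conj (hQ : Q * Qᵀ = 1) {f : Fin p → ℝ} (hf : ∀ j, 0 < f j) :
    (Q * diagonal f * Qᵀ).PosDef := by
  have hD : (diagonal f).PosDef := .diagonal hf
  refine .of_dotProduct_mulVec_pos ?_ fun x hx => ?_
  · show (Q * diagonal f * Qᵀ)ᴴ = Q * diagonal f * Qᵀ
    have ht := conj_transpose (Q := Q) f
    ext i j
    have h2 := congrFun (congrFun ht i) j
    simpa [Matrix.conjTranspose_apply, Matrix.transpose_apply] using h2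
  · have hy : Qᵀ *ᵥ x ≠ 0 := by
      intro h0
      apply hx
      have hxx : Q *ᵥ (Qᵀ *ᵥ x) = x := by
        rw [Matrix.mulVec_mulVec, hQ, Matrix.one_mulVec]
      rw [← hxx, h0, Matrix.mulVec_zero]
    have hpos := hD.dotProduct_mulVec_pos hy
    rw [star_trivial] at hpos
    rw [star_trivial]
    have e1 : x ⬝ᵥ ((Q * diagonal f * Qᵀ) *ᵥ x)
        = (Qᵀ *ᵥ x) ⬝ᵥ (diagonal f *ᵥ (Qᵀ *ᵥ x)) := by
      rw [← Matrix.mulVec_mulVec, ← Matrix.mulVec_mulVec, Matrix.dotProduct_mulVec,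
        ← Matrix.mulVec_transpose]
    rw [e1]
    exact hpos

/-- The difference of the AULTE and MAULTE covariance matrices is positive definite. -/
lemma covDiff_posDef (hQ : Q * Qᵀ = 1) {lam : Fin p → ℝ} (hlam : ∀ j, 0 < lam j)
    {k d : ℝ} (hk : 0 < k) (h : ∀ j, (k + d) * (2 * lam j + k - d) > 0)
    (hdl : ∀ j, d ≠ lam j) :
    (covAULTE (Q * diagonal lam * Qᵀ) k d - covMAULTE (Q * diagonal lam * Qᵀ) k d).PosDef := by
  have hQ' : Qᵀ * Q = 1 := mul_eq_one_comm.mp hQ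
  have hs : ∀ j, (0:ℝ) < lam j + k := fun j => by linarith [hlam j]
  have hV1 : Q * diagonal lam * Qᵀ + k • (1 : Matrix (Fin p) (Fin p) ℝ)
      = Q * diagonal (fun j => lam j + k) * Qᵀ := by
    rw [← conj_one (Q := Q) hQ, conj_smul, conj_add]
    simp
  have hinv : (Q * diagonal lam * Qᵀ + k • (1 : Matrix (Fin p) (Fin p) ℝ))⁻¹
      = Q * diagonal (fun j => (lam j + k)⁻¹) * Qᵀ := by
    rw [hV1, conj_inv hQ hQ' (fun j => (hs j).ne')]
  have hVinv : (Q * diagonal lam * Qᵀ)⁻¹ = Q * diagonal (fun j => (lam j)⁻¹) * Qᵀ :=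
    conj_inv hQ hQ' (fun j => (hlam j).ne')
  have hsq : ((Q * diagonal lam * Qᵀ + k • (1 : Matrix (Fin p) (Fin p) ℝ))⁻¹) ^ 2
      = Q * diagonal (fun j => (lam j + k)⁻¹ * (lam j + k)⁻¹) * Qᵀ := by
    rw [sq, hinv, conj_mul hQ']
  have hA1 : (1 : Matrix (Fin p) (Fin p) ℝ) -
      (k + d) ^ 2 • ((Q * diagonal lam * Qᵀ + k • (1 : Matrix (Fin p) (Fin p) ℝ))⁻¹) ^ 2
      = Q * diagonal (fun j => 1 - (k + d) ^ 2 * ((lam j + k)⁻¹ * (lam j + k)⁻¹)) * Qᵀ := by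
    rw [hsq, conj_smul, ← conj_one (Q := Q) hQ, conj_sub]
  have hB : (1 : Matrix (Fin p) (Fin p) ℝ) -
      (k + d) • (Q * diagonal lam * Qᵀ + k • (1 : Matrix (Fin p) (Fin p) ℝ))⁻¹
      = Q * diagonal (fun j => 1 - (k + d) * (lam j + k)⁻¹) * Qᵀ := by
    rw [hinv, conj_smul, ← conj_one (Q := Q) hQ, conj_sub]
  have hcovA : covAULTE (Q * diagonal lam * Qᵀ) k d
      = Q * diagonal (fun j => (1 - (k + d) ^ 2 * ((lam j + k)⁻¹ * (lam j + k)⁻¹)) * (lam j)⁻¹ *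
          (1 - (k + d) ^ 2 * ((lam j + k)⁻¹ * (lam j + k)⁻¹))) * Qᵀ := by
    rw [covAULTE, hA1, hVinv, conj_mul hQ', conj_mul hQ']
  have hm : mMAULTE (Q * diagonal lam * Qᵀ) k d
      = Q * diagonal (fun j => (1 - (k + d) ^ 2 * ((lam j + k)⁻¹ * (lam j + k)⁻¹)) *
          (1 - (k + d) * (lam j + k)⁻¹)) * Qᵀ := by
    rw [mMAULTE, hA1, hB, conj_mul hQ']
  have hcovM : covMAULTE (Q * diagonal lam * Qᵀ) k d
      = Q * diagonal (fun j => ((1 - (k + d) ^ 2 * ((lam j + k)⁻¹ * (lam j + k)⁻¹)) *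
          (1 - (k + d) * (lam j + k)⁻¹)) * (lam j)⁻¹ *
          ((1 - (k + d) ^ 2 * ((lam j + k)⁻¹ * (lam j + k)⁻¹)) *
          (1 - (k + d) * (lam j + k)⁻¹))) * Qᵀ := by
    rw [covMAULTE, hm, conj_transpose, hVinv, conj_mul hQ', conj_mul hQ']
  rw [hcovA, hcovM, conj_sub]
  apply posDef_conj hQ
  intro j
  -- now a purely scalar positivity claim
  set lj := lam j with hlj
  have hl : 0 < lj := hlam j
  have hsj : 0 < lj + k := hs j
  set wj := (lj + k)⁻¹ with hwj
  have hwpos : 0 < wj := inv_pos.mpr hsj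
  set aj := 1 - (k + d) ^ 2 * (wj * wj) with haj
  have hsum_ne : lj + 2 * k + d ≠ 0 := by
    intro h0
    have h0' : (k + d) * (2 * lj + k - d) = -3 * (lj + k) ^ 2 := by
      linear_combination (4 * (lj + k) - (lj + 2 * k + d)) * h0
    nlinarith [h j, sq_nonneg (lj + k)]
  have hdiff_ne : lj - d ≠ 0 := sub_ne_zero.mpr (fun hh => (hdl j) hh.symm)
  have hw' : wj * (lj + k) = 1 := inv_mul_cancel₀ hsj.ne'
  have ha_ne : aj ≠ 0 := by
    have haval : aj = ((lj - d) * (lj + 2 * k + d)) * (wj * wj) := by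
      rw [haj]
      linear_combination (-(wj * (lj + k) + 1)) * hw'
    rw [haval]
    exact mul_ne_zero (mul_ne_zero hdiff_ne hsum_ne) (by positivity)
  have hcw : 0 < (k + d) * wj * (2 - (k + d) * wj) := by
    have hval : (k + d) * wj * (2 - (k + d) * wj)
        = ((k + d) * (2 * lj + k - d)) * (wj * wj) := by
      linear_combination (-2 * (k + d) * wj) * hw'
    rw [hval]
    exact mul_pos (h j) (by positivity)
  have hexpr : aj * lj⁻¹ * aj - aj * (1 - (k + d) * wj) * lj⁻¹ * (aj * (1 - (k + d) * wj))
      = aj ^ 2 * lj⁻¹ * ((k + d) * wj * (2 - (k + d) * wj)) := by ring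
  calc (0:ℝ) < aj ^ 2 * lj⁻¹ * ((k + d) * wj * (2 - (k + d) * wj)) := by
        have h1 : 0 < aj ^ 2 := pow_two_pos_of_ne_zero ha_ne
        have h2 : 0 < lj⁻¹ := inv_pos.mpr hl
        exact mul_pos (mul_pos h1 h2) hcw
    _ = _ := hexpr.symm

end BellAux

/-- MMSE comparison of AULTE and MAULTE. -/
theorem mmseAULTE_sub_mmseMAULTE_posDef_iff (p : ℕ) (Q : Matrix (Fin p) (Fin p) ℝ)
    (hQ : Q * Qᵀ = 1) (lam : Fin p → ℝ) (hlam : ∀ j, 0 < lam j) (k d : ℝ) (hk : 0 < k)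
    (h : ∀ j, (k + d) * (2 * lam j + k - d) > 0) (hdl : ∀ j, d ≠ lam j) (β : Fin p → ℝ) :
    (mmse (covAULTE (Q * Matrix.diagonal lam * Qᵀ) k d)
        (biasAULTE (Q * Matrix.diagonal lam * Qᵀ) k d β) -
      mmse (covMAULTE (Q * Matrix.diagonal lam * Qᵀ) k d)
        (biasMAULTE (Q * Matrix.diagonal lam * Qᵀ) k d β)).PosDef ↔
      biasMAULTE (Q * Matrix.diagonal lam * Qᵀ) k d β ⬝ᵥ
        ((covAULTE (Q * Matrix.diagonal lam * Qᵀ) k d -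
            covMAULTE (Q * Matrix.diagonal lam * Qᵀ) k d) +
          Matrix.vecMulVec (biasAULTE (Q * Matrix.diagonal lam * Qᵀ) k d β)
            (biasAULTE (Q * Matrix.diagonal lam * Qᵀ) k d β))⁻¹ *ᵥ
        biasMAULTE (Q * Matrix.diagonal lam * Qᵀ) k d β < 1 := by
  have hdiff := BellAux.covDiff_posDef hQ hlam hk h hdl
  have hN : ((covAULTE (Q * Matrix.diagonal lam * Qᵀ) k d -
      covMAULTE (Q * Matrix.diagonal lam * Qᵀ) k d) +
      Matrix.vecMulVec (biasAULTE (Q * Matrix.diagonal lam * Qᵀ) k d β)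
        (biasAULTE (Q * Matrix.diagonal lam * Qᵀ) k d β)).PosDef :=
    hdiff.add_posSemidef (BellAux.posSemidef_vecMulVec _)
  have hmat : mmse (covAULTE (Q * Matrix.diagonal lam * Qᵀ) k d)
        (biasAULTE (Q * Matrix.diagonal lam * Qᵀ) k d β) -
      mmse (covMAULTE (Q * Matrix.diagonal lam * Qᵀ) k d)
        (biasMAULTE (Q * Matrix.diagonal lam * Qᵀ) k d β)
      = ((covAULTE (Q * Matrix.diagonal lam * Qᵀ) k d -
          covMAULTE (Q * Matrix.diagonal lam * Qᵀ) k d) +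
        Matrix.vecMulVec (biasAULTE (Q * Matrix.diagonal lam * Qᵀ) k d β)
          (biasAULTE (Q * Matrix.diagonal lam * Qᵀ) k d β)) -
        Matrix.vecMulVec (biasMAULTE (Q * Matrix.diagonal lam * Qᵀ) k d β)
          (biasMAULTE (Q * Matrix.diagonal lam * Qᵀ) k d β) := by
    simp only [mmse]
    abel
  rw [hmat]
  exact BellAux.posDef_sub_vecMulVec_iff hN _
end

section
/- The difference of covariance matrices of the almost unbiased Liu-type estimator and the modified almost unbiased Liu-type estimator admits the spectral decomposition Cov_AULTE − Cov_MAULTE = Q · diag( (λ_j − d)²(λ_j + 2k + d)²(k + d)(2λ_j + k − d) / (λ_j (λ_j + k)⁶) ; j = 1,…,p ) · Qᵀ. -/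
open Matrix

-- auxiliary lemmas
section aux
variable {p : ℕ} (Q : Matrix (Fin p) (Fin p) ℝ)

lemma conj_mul_conj_s14 (hQ' : Qᵀ * Q = 1) (A B : Matrix (Fin p) (Fin p) ℝ) :
    (Q * A * Qᵀ) * (Q * B * Qᵀ) = Q * (A * B) * Qᵀ := by
  simp only [Matrix.mul_assoc]
  rw [← Matrix.mul_assoc Qᵀ Q, hQ', Matrix.one_mul]

lemma conj_diag_inv (hQ : Q * Qᵀ = 1) (v : Fin p → ℝ) (hv : ∀ j, v j ≠ 0) :
    (Q * Matrix.diagonal v * Qᵀ)⁻¹ = Q * Matrix.diagonal (fun j => (v j)⁻¹) * Qᵀ := by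
  have hQ' : Qᵀ * Q = 1 := mul_eq_one_comm.mp hQ
  apply Matrix.inv_eq_right_inv
  rw [conj_mul_conj_s14 Q hQ', Matrix.diagonal_mul_diagonal]
  have : (fun j => v j * (v j)⁻¹) = fun _ => (1:ℝ) := by
    funext j; exact mul_inv_cancel₀ (hv j)
  rw [this, ← Matrix.smul_one_eq_diagonal, one_smul, Matrix.mul_one, hQ]

end aux


/-- Spectral decomposition of `Cov_AULTE − Cov_MAULTE`. -/
theorem covAULTE_sub_covMAULTE_eq (p : ℕ) (Q : Matrix (Fin p) (Fin p) ℝ) (hQ : Q * Qᵀ = 1)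
    (lam : Fin p → ℝ) (hlam : ∀ j, 0 < lam j) (k d : ℝ) (hk : 0 < k) :
    covAULTE (Q * Matrix.diagonal lam * Qᵀ) k d - covMAULTE (Q * Matrix.diagonal lam * Qᵀ) k d =
      Q * Matrix.diagonal (fun j =>
        (lam j - d) ^ 2 * (lam j + 2 * k + d) ^ 2 * (k + d) * (2 * lam j + k - d) /
          (lam j * (lam j + k) ^ 6)) * Qᵀ := by
  have hQ' : Qᵀ * Q = 1 := mul_eq_one_comm.mp hQ
  have hlk : ∀ j, lam j + k ≠ 0 := fun j => by have := hlam j; positivity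
  have hl0 : ∀ j, lam j ≠ 0 := fun j => (hlam j).ne'
  -- V + k • 1 as a conjugated diagonal
  have hVk : Q * Matrix.diagonal lam * Qᵀ + k • 1 =
      Q * Matrix.diagonal (fun j => lam j + k) * Qᵀ := by
    have h1 : Matrix.diagonal (fun j => lam j + k) =
        Matrix.diagonal lam + Matrix.diagonal (fun _ => k) := by
      rw [Matrix.diagonal_add]
    rw [h1, Matrix.mul_add, Matrix.add_mul, ← Matrix.smul_one_eq_diagonal,
      mul_smul_comm, smul_mul_assoc, Matrix.mul_one, hQ]
  -- conjugated inverses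
  have hinv : (Q * Matrix.diagonal lam * Qᵀ + k • 1)⁻¹ =
      Q * Matrix.diagonal (fun j => (lam j + k)⁻¹) * Qᵀ := by
    rw [hVk, conj_diag_inv Q hQ _ hlk]
  have hVinv : (Q * Matrix.diagonal lam * Qᵀ)⁻¹ =
      Q * Matrix.diagonal (fun j => (lam j)⁻¹) * Qᵀ := conj_diag_inv Q hQ _ hl0
  -- compressed conjugation of the polynomial pieces
  have hsq : ((Q * Matrix.diagonal lam * Qᵀ + k • 1)⁻¹) ^ 2 =
      Q * Matrix.diagonal (fun j => ((lam j + k)⁻¹) ^ 2) * Qᵀ := by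
    rw [hinv, sq, conj_mul_conj_s14 Q hQ', Matrix.diagonal_mul_diagonal]
    have h2 : (fun j => (lam j + k)⁻¹ * (lam j + k)⁻¹) = fun j => ((lam j + k)⁻¹) ^ 2 := by
      funext j; exact (sq _).symm
    rw [h2]
  have hA : (1 : Matrix (Fin p) (Fin p) ℝ) -
      (k + d) ^ 2 • ((Q * Matrix.diagonal lam * Qᵀ + k • 1)⁻¹) ^ 2 =
      Q * Matrix.diagonal (fun j => 1 - (k + d) ^ 2 * ((lam j + k)⁻¹) ^ 2) * Qᵀ := by
    rw [hsq]
    have h1 : Matrix.diagonal (fun j => 1 - (k + d) ^ 2 * ((lam j + k)⁻¹) ^ 2) =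
        (1 : Matrix (Fin p) (Fin p) ℝ) -
          (k + d) ^ 2 • Matrix.diagonal (fun j => ((lam j + k)⁻¹) ^ 2) := by
      rw [← Matrix.diagonal_smul, ← Matrix.diagonal_one, ← Matrix.diagonal_sub]
      rfl
    rw [h1, Matrix.mul_sub, Matrix.sub_mul, Matrix.mul_one, hQ,
      mul_smul_comm, smul_mul_assoc]
  have hB : (1 : Matrix (Fin p) (Fin p) ℝ) -
      (k + d) • (Q * Matrix.diagonal lam * Qᵀ + k • 1)⁻¹ =
      Q * Matrix.diagonal (fun j => 1 - (k + d) * (lam j + k)⁻¹) * Qᵀ := by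
    rw [hinv]
    have h1 : Matrix.diagonal (fun j => 1 - (k + d) * (lam j + k)⁻¹) =
        (1 : Matrix (Fin p) (Fin p) ℝ) -
          (k + d) • Matrix.diagonal (fun j => (lam j + k)⁻¹) := by
      rw [← Matrix.diagonal_smul, ← Matrix.diagonal_one, ← Matrix.diagonal_sub]
      rfl
    rw [h1, Matrix.mul_sub, Matrix.sub_mul, Matrix.mul_one, hQ,
      mul_smul_comm, smul_mul_assoc]
  -- now unfold everything
  unfold covAULTE covMAULTE mMAULTE
  rw [hA, hB, hVinv, conj_mul_conj_s14 Q hQ', conj_mul_conj_s14 Q hQ', conj_mul_conj_s14 Q hQ',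
    Matrix.transpose_mul, Matrix.transpose_mul, Matrix.transpose_transpose]
  simp only [Matrix.diagonal_mul_diagonal, Matrix.diagonal_transpose]
  rw [← Matrix.mul_assoc Q _ Qᵀ, conj_mul_conj_s14 Q hQ', conj_mul_conj_s14 Q hQ']
  simp only [Matrix.diagonal_mul_diagonal]
  rw [← Matrix.sub_mul, ← Matrix.mul_sub, Matrix.diagonal_sub]
  congr 2
  refine Matrix.diagonal_eq_diagonal_iff.mpr fun i => ?_
  have h1 := hl0 i
  have h2 := hlk i
  field_simp
  ring
end

section
/- The scalar mean squared error of the Liu-type estimator satisfies trace(Cov_LTE) + b_LTEᵀ b_LTE = Σ_{j=1}^p (λ_j − d)²/(λ_j (λ_j + k)²) + (d + k)² Σ_{j=1}^p α_j²/(λ_j + k)², where α = Qᵀβ. -/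
open Matrix

variable {p : ℕ}

lemma myConjMul (Q : Matrix (Fin p) (Fin p) ℝ) (hQ' : Qᵀ * Q = 1)
    (A B : Matrix (Fin p) (Fin p) ℝ) :
    (Q * A * Qᵀ) * (Q * B * Qᵀ) = Q * (A * B) * Qᵀ := by
  calc (Q * A * Qᵀ) * (Q * B * Qᵀ) = Q * A * (Qᵀ * Q) * B * Qᵀ := by
        simp only [Matrix.mul_assoc]
    _ = Q * (A * B) * Qᵀ := by rw [hQ']; simp only [Matrix.mul_one, Matrix.mul_assoc]

lemma myConjInv (Q : Matrix (Fin p) (Fin p) ℝ) (hQ : Q * Qᵀ = 1) (hQ' : Qᵀ * Q = 1)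
    (v : Fin p → ℝ) (hv : ∀ j, v j ≠ 0) :
    (Q * diagonal v * Qᵀ)⁻¹ = Q * diagonal (fun j => (v j)⁻¹) * Qᵀ := by
  apply inv_eq_right_inv
  rw [myConjMul Q hQ', diagonal_mul_diagonal]
  have h : (fun j => v j * (v j)⁻¹) = fun _ => (1:ℝ) := by
    funext j; exact mul_inv_cancel₀ (hv j)
  rw [h, diagonal_one, Matrix.mul_one, hQ]

lemma myTraceConj (Q : Matrix (Fin p) (Fin p) ℝ) (hQ' : Qᵀ * Q = 1)
    (A : Matrix (Fin p) (Fin p) ℝ) : (Q * A * Qᵀ).trace = A.trace := by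
  rw [Matrix.trace_mul_cycle, hQ', Matrix.one_mul]



/-- Scalar MSE of the LTE. -/
theorem mse_LTE_eq (p : ℕ) (Q : Matrix (Fin p) (Fin p) ℝ) (hQ : Q * Qᵀ = 1)
    (lam : Fin p → ℝ) (hlam : ∀ j, 0 < lam j) (k d : ℝ) (hk : 0 < k) (β : Fin p → ℝ) :
    (covLTE (Q * Matrix.diagonal lam * Qᵀ) k d).trace +
        biasLTE (Q * Matrix.diagonal lam * Qᵀ) k d β ⬝ᵥ
          biasLTE (Q * Matrix.diagonal lam * Qᵀ) k d β =
      (∑ j, (lam j - d) ^ 2 / (lam j * (lam j + k) ^ 2)) +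
        (d + k) ^ 2 * ∑ j, (Qᵀ *ᵥ β) j ^ 2 / (lam j + k) ^ 2 := by
  have hQ' : Qᵀ * Q = 1 := mul_eq_one_comm.mp hQ
  set V := Q * Matrix.diagonal lam * Qᵀ with hV
  have hlamne : ∀ j, lam j ≠ 0 := fun j => (hlam j).ne'
  have hlkne : ∀ j, lam j + k ≠ 0 := fun j => (add_pos (hlam j) hk).ne'
  have hVk : V + k • 1 = Q * diagonal (fun j => lam j + k) * Qᵀ := by
    have : diagonal (fun j => lam j + k) = diagonal lam + k • 1 := by
      rw [smul_one_eq_diagonal, diagonal_add]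
    rw [this, Matrix.mul_add, Matrix.add_mul, Matrix.mul_smul, Matrix.smul_mul, Matrix.mul_one, hQ]
  have hVd : V - d • 1 = Q * diagonal (fun j => lam j - d) * Qᵀ := by
    have : diagonal (fun j => lam j - d) = diagonal lam - d • 1 := by
      rw [smul_one_eq_diagonal, diagonal_sub]
    rw [this, Matrix.mul_sub, Matrix.sub_mul, Matrix.mul_smul, Matrix.smul_mul, Matrix.mul_one, hQ]
  have hVinv : V⁻¹ = Q * diagonal (fun j => (lam j)⁻¹) * Qᵀ :=
    myConjInv Q hQ hQ' lam hlamne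
  have hVkinv : (V + k • 1)⁻¹ = Q * diagonal (fun j => (lam j + k)⁻¹) * Qᵀ := by
    rw [hVk]; exact myConjInv Q hQ hQ' _ hlkne
  have hcov : covLTE V k d = Q * diagonal (fun j =>
      (lam j + k)⁻¹ * (lam j - d) * (lam j)⁻¹ * (lam j - d) * (lam j + k)⁻¹) * Qᵀ := by
    rw [covLTE, hVkinv, hVd, hVinv, myConjMul Q hQ', myConjMul Q hQ', myConjMul Q hQ',
      myConjMul Q hQ', diagonal_mul_diagonal, diagonal_mul_diagonal, diagonal_mul_diagonal,
      diagonal_mul_diagonal]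
  have htr : (covLTE V k d).trace = ∑ j, (lam j - d) ^ 2 / (lam j * (lam j + k) ^ 2) := by
    rw [hcov, myTraceConj Q hQ', trace_diagonal]
    refine Finset.sum_congr rfl fun j _ => ?_
    field_simp
  have hmv : ∀ x y : Fin p → ℝ, (Q *ᵥ x) ⬝ᵥ (Q *ᵥ y) = x ⬝ᵥ y := by
    intro x y
    rw [dotProduct_mulVec, ← vecMul_transpose, vecMul_vecMul, hQ', vecMul_one]
  have hbias : biasLTE V k d β ⬝ᵥ biasLTE V k d β =
      (d + k) ^ 2 * ∑ j, (Qᵀ *ᵥ β) j ^ 2 / (lam j + k) ^ 2 := by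
    rw [biasLTE, hVkinv, smul_dotProduct, dotProduct_smul]
    have hw : (Q * diagonal (fun j => (lam j + k)⁻¹) * Qᵀ) *ᵥ β
        = Q *ᵥ (diagonal (fun j => (lam j + k)⁻¹) *ᵥ (Qᵀ *ᵥ β)) := by
      rw [mulVec_mulVec, mulVec_mulVec]
    rw [hw, hmv]
    have hx : (diagonal (fun j => (lam j + k)⁻¹) *ᵥ (Qᵀ *ᵥ β)) ⬝ᵥ
        (diagonal (fun j => (lam j + k)⁻¹) *ᵥ (Qᵀ *ᵥ β)) =
        ∑ j, (Qᵀ *ᵥ β) j ^ 2 / (lam j + k) ^ 2 := by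
      rw [dotProduct]
      refine Finset.sum_congr rfl fun j _ => ?_
      rw [mulVec_diagonal]
      field_simp
    rw [hx, smul_eq_mul, smul_eq_mul, Finset.mul_sum, Finset.mul_sum, Finset.mul_sum]
    exact Finset.sum_congr rfl fun j _ => by ring
  rw [htr, hbias]
end

section
/- The scalar mean squared error of the almost unbiased Liu-type estimator satisfies trace(Cov_AULTE) + b_AULTEᵀ b_AULTE = Σ_{j=1}^p (λ_j − d)²(λ_j + d + 2k)²/(λ_j (λ_j + k)⁴) + (k + d)⁴ Σ_{j=1}^p α_j²/(λ_j + k)⁴, where α = Qᵀβ. -/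
open Matrix

/-- Scalar MSE of the AULTE. -/
theorem mse_AULTE_eq (p : ℕ) (Q : Matrix (Fin p) (Fin p) ℝ) (hQ : Q * Qᵀ = 1)
    (lam : Fin p → ℝ) (hlam : ∀ j, 0 < lam j) (k d : ℝ) (hk : 0 < k) (β : Fin p → ℝ) :
    (covAULTE (Q * Matrix.diagonal lam * Qᵀ) k d).trace +
        biasAULTE (Q * Matrix.diagonal lam * Qᵀ) k d β ⬝ᵥ
          biasAULTE (Q * Matrix.diagonal lam * Qᵀ) k d β =
      (∑ j, (lam j - d) ^ 2 * (lam j + d + 2 * k) ^ 2 / (lam j * (lam j + k) ^ 4)) +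
        (k + d) ^ 4 * ∑ j, (Qᵀ *ᵥ β) j ^ 2 / (lam j + k) ^ 4 := by
  have hQt : Qᵀ * Q = 1 := mul_eq_one_comm.mp hQ
  have hQinv : Q⁻¹ = Qᵀ := inv_eq_right_inv hQ
  have hQtinv : Qᵀ⁻¹ = Q := inv_eq_right_inv hQt
  have hlam0 : ∀ j, lam j ≠ 0 := fun j => ne_of_gt (hlam j)
  have hlk : ∀ j, lam j + k ≠ 0 := fun j => ne_of_gt (add_pos (hlam j) hk)
  set w : Fin p → ℝ := fun j => (lam j + k)⁻¹ with hw
  set D : Matrix (Fin p) (Fin p) ℝ := Matrix.diagonal lam with hD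
  set E : Matrix (Fin p) (Fin p) ℝ := Matrix.diagonal (fun j => lam j + k) with hE
  -- conjugation lemmas
  have conj_mul : ∀ A B : Matrix (Fin p) (Fin p) ℝ,
      (Q * A * Qᵀ) * (Q * B * Qᵀ) = Q * (A * B) * Qᵀ := by
    intro A B
    simp only [Matrix.mul_assoc]
    rw [← Matrix.mul_assoc Qᵀ Q, hQt, Matrix.one_mul]
  have hsmul1 : (k • (1 : Matrix (Fin p) (Fin p) ℝ)) = Matrix.diagonal (fun _ => k) := by
    ext i j
    by_cases h : i = j <;> simp [Matrix.one_apply, Matrix.diagonal_apply, h]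
  have hVk : Q * D * Qᵀ + k • (1 : Matrix (Fin p) (Fin p) ℝ) = Q * E * Qᵀ := by
    have h1 : (k • (1 : Matrix (Fin p) (Fin p) ℝ)) = Q * (k • (1 : Matrix (Fin p) (Fin p) ℝ)) * Qᵀ := by
      rw [Matrix.mul_smul, Matrix.mul_one, Matrix.smul_mul, hQ]
    rw [h1, ← Matrix.add_mul, ← Matrix.mul_add]
    congr 1
    rw [hsmul1, hD, hE, Matrix.diagonal_add]
  have hEinv : E⁻¹ = Matrix.diagonal w := by
    apply inv_eq_right_inv
    rw [hE, Matrix.diagonal_mul_diagonal]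
    have h2 : (fun j => (lam j + k) * w j) = fun _ => (1 : ℝ) :=
      funext fun j => mul_inv_cancel₀ (hlk j)
    rw [h2, Matrix.diagonal_one]
  have hDinv : D⁻¹ = Matrix.diagonal (fun j => (lam j)⁻¹) := by
    apply inv_eq_right_inv
    rw [hD, Matrix.diagonal_mul_diagonal]
    have h2 : (fun j => lam j * (lam j)⁻¹) = fun _ => (1 : ℝ) :=
      funext fun j => mul_inv_cancel₀ (hlam0 j)
    rw [h2, Matrix.diagonal_one]
  have conj_inv : ∀ A : Matrix (Fin p) (Fin p) ℝ, (Q * A * Qᵀ)⁻¹ = Q * A⁻¹ * Qᵀ := by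
    intro A
    rw [Matrix.mul_inv_rev, Matrix.mul_inv_rev, hQinv, hQtinv, Matrix.mul_assoc]
  -- the inverse (V + k•1)⁻¹
  have hN : (Q * D * Qᵀ + k • (1 : Matrix (Fin p) (Fin p) ℝ))⁻¹
      = Q * Matrix.diagonal w * Qᵀ := by
    rw [hVk, conj_inv, hEinv]
  have hN2 : ((Q * D * Qᵀ + k • (1 : Matrix (Fin p) (Fin p) ℝ))⁻¹) ^ 2
      = Q * Matrix.diagonal (fun j => w j * w j) * Qᵀ := by
    rw [hN, sq, conj_mul, Matrix.diagonal_mul_diagonal]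
  -- the factor matrix
  set a : Fin p → ℝ := fun j => 1 - (k + d) ^ 2 * (w j * w j) with ha
  have hfac : (1 : Matrix (Fin p) (Fin p) ℝ)
      - (k + d) ^ 2 • (((Q * D * Qᵀ + k • (1 : Matrix (Fin p) (Fin p) ℝ))⁻¹) ^ 2)
      = Q * Matrix.diagonal a * Qᵀ := by
    rw [hN2]
    have h1 : (1 : Matrix (Fin p) (Fin p) ℝ) = Q * 1 * Qᵀ := by rw [Matrix.mul_one, hQ]
    have h2 : ((k + d) ^ 2 : ℝ) • ((Q * Matrix.diagonal (fun j => w j * w j)) * Qᵀ)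
        = Q * ((k + d) ^ 2 • Matrix.diagonal (fun j => w j * w j)) * Qᵀ := by
      rw [← Matrix.smul_mul, ← Matrix.mul_smul]
    rw [h2]
    nth_rewrite 1 [h1]
    rw [← Matrix.sub_mul, ← Matrix.mul_sub]
    have h3 : (1 : Matrix (Fin p) (Fin p) ℝ)
        - (k + d) ^ 2 • Matrix.diagonal (fun j => w j * w j) = Matrix.diagonal a := by
      ext i j
      by_cases h : i = j <;>
        simp [Matrix.one_apply, Matrix.diagonal_apply, Matrix.sub_apply, Matrix.smul_apply,
          ha, h]
    rw [h3]
  have hVinv : (Q * D * Qᵀ)⁻¹ = Q * Matrix.diagonal (fun j => (lam j)⁻¹) * Qᵀ := by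
    rw [conj_inv, hDinv]
  -- covariance as a conjugated diagonal matrix
  have hcov : covAULTE (Q * D * Qᵀ) k d
      = Q * Matrix.diagonal (fun j => a j * (lam j)⁻¹ * a j) * Qᵀ := by
    rw [covAULTE, hfac, hVinv, conj_mul, conj_mul, Matrix.diagonal_mul_diagonal,
      Matrix.diagonal_mul_diagonal]
  -- trace part
  have htrace : (covAULTE (Q * D * Qᵀ) k d).trace
      = ∑ j, (lam j - d) ^ 2 * (lam j + d + 2 * k) ^ 2 / (lam j * (lam j + k) ^ 4) := by
    rw [hcov, Matrix.trace_mul_cycle, hQt, Matrix.one_mul, Matrix.trace_diagonal]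
    apply Finset.sum_congr rfl
    intro j _
    simp only [ha, hw]
    field_simp [hlk j, hlam0 j]
    ring
  -- bias part
  have hbias : biasAULTE (Q * D * Qᵀ) k d β
      = (-(d + k) ^ 2) • (Q *ᵥ (Matrix.diagonal (fun j => w j * w j) *ᵥ (Qᵀ *ᵥ β))) := by
    rw [biasAULTE, hN2, Matrix.mulVec_mulVec, Matrix.mulVec_mulVec]
  have hQdot : ∀ x : Fin p → ℝ, (Q *ᵥ x) ⬝ᵥ (Q *ᵥ x) = x ⬝ᵥ x := by
    intro x
    rw [Matrix.dotProduct_mulVec, ← Matrix.mulVec_transpose, Matrix.mulVec_mulVec, hQt,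
      Matrix.one_mulVec]
  have hbiasdot : biasAULTE (Q * D * Qᵀ) k d β ⬝ᵥ biasAULTE (Q * D * Qᵀ) k d β
      = (k + d) ^ 4 * ∑ j, (Qᵀ *ᵥ β) j ^ 2 / (lam j + k) ^ 4 := by
    rw [hbias, smul_dotProduct, dotProduct_smul, hQdot, smul_eq_mul, smul_eq_mul,
      dotProduct, Finset.mul_sum, Finset.mul_sum, Finset.mul_sum]
    apply Finset.sum_congr rfl
    intro j _
    rw [Matrix.mulVec_diagonal]
    simp only [hw]
    field_simp [hlk j]
    ring
  rw [htrace, hbiasdot]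
end

section
/- The scalar mean squared error of the modified almost unbiased Liu-type estimator satisfies trace(Cov_MAULTE) + b_MAULTEᵀ b_MAULTE = Σ_{j=1}^p (λ_j − d)⁴(λ_j + d + 2k)²/(λ_j (λ_j + k)⁶) + (k + d)² Σ_{j=1}^p α_j² ((λ_j + k)² + (k + d)(λ_j − d))²/(λ_j + k)⁶, where α = Qᵀβ. -/
open Matrix

namespace MseAux


variable {p : ℕ}

noncomputable def conj (Q : Matrix (Fin p) (Fin p) ℝ) (f : Fin p → ℝ) :
    Matrix (Fin p) (Fin p) ℝ :=
  Q * Matrix.diagonal f * Qᵀ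

lemma hQ' (Q : Matrix (Fin p) (Fin p) ℝ) (hQ : Q * Qᵀ = 1) : Qᵀ * Q = 1 :=
  mul_eq_one_comm.mp hQ

lemma conj_mul (Q : Matrix (Fin p) (Fin p) ℝ) (hQ : Q * Qᵀ = 1) (f g : Fin p → ℝ) :
    conj Q f * conj Q g = conj Q (f * g) := by
  simp only [conj, Matrix.mul_assoc]
  rw [← Matrix.mul_assoc Qᵀ Q, hQ' Q hQ, Matrix.one_mul,
    ← Matrix.mul_assoc (Matrix.diagonal f), Matrix.diagonal_mul_diagonal]
  rfl

lemma conj_one (Q : Matrix (Fin p) (Fin p) ℝ) (hQ : Q * Qᵀ = 1) : conj Q 1 = 1 := by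
  have h : Matrix.diagonal (1 : Fin p → ℝ) = (1 : Matrix (Fin p) (Fin p) ℝ) :=
    Matrix.diagonal_one
  rw [conj, h, Matrix.mul_one, hQ]

lemma conj_add (Q : Matrix (Fin p) (Fin p) ℝ) (f g : Fin p → ℝ) :
    conj Q (f + g) = conj Q f + conj Q g := by
  have : Matrix.diagonal (f + g) = Matrix.diagonal f + Matrix.diagonal g := by
    rw [Matrix.diagonal_add]; rfl
  simp only [conj]
  rw [this, Matrix.mul_add, Matrix.add_mul]

lemma conj_sub (Q : Matrix (Fin p) (Fin p) ℝ) (f g : Fin p → ℝ) :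
    conj Q (f - g) = conj Q f - conj Q g := by
  have : Matrix.diagonal (f - g) = Matrix.diagonal f - Matrix.diagonal g := by
    rw [Matrix.diagonal_sub]; rfl
  simp only [conj]
  rw [this, Matrix.mul_sub, Matrix.sub_mul]

lemma conj_smul (Q : Matrix (Fin p) (Fin p) ℝ) (a : ℝ) (f : Fin p → ℝ) :
    conj Q (a • f) = a • conj Q f := by
  simp [conj, Matrix.diagonal_smul, Matrix.mul_smul, Matrix.smul_mul]

lemma conj_inv (Q : Matrix (Fin p) (Fin p) ℝ) (hQ : Q * Qᵀ = 1) (f : Fin p → ℝ)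
    (hf : ∀ j, f j ≠ 0) : (conj Q f)⁻¹ = conj Q f⁻¹ := by
  apply Matrix.inv_eq_right_inv
  rw [conj_mul Q hQ]
  have : f * f⁻¹ = 1 := by funext j; simp [mul_inv_cancel₀ (hf j)]
  rw [this, conj_one Q hQ]

lemma conj_transpose (Q : Matrix (Fin p) (Fin p) ℝ) (f : Fin p → ℝ) :
    (conj Q f)ᵀ = conj Q f := by
  simp [conj, Matrix.transpose_mul, Matrix.diagonal_transpose, Matrix.mul_assoc]

lemma conj_trace (Q : Matrix (Fin p) (Fin p) ℝ) (hQ : Q * Qᵀ = 1) (f : Fin p → ℝ) :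
    (conj Q f).trace = ∑ j, f j := by
  rw [conj, Matrix.trace_mul_comm, ← Matrix.mul_assoc, hQ' Q hQ, Matrix.one_mul,
    Matrix.trace_diagonal]

lemma conj_mulVec (Q : Matrix (Fin p) (Fin p) ℝ) (f β : Fin p → ℝ) :
    conj Q f *ᵥ β = Q *ᵥ fun j => f j * (Qᵀ *ᵥ β) j := by
  have h : Matrix.diagonal f *ᵥ (Qᵀ *ᵥ β) = fun j => f j * (Qᵀ *ᵥ β) j := by
    funext j; rw [Matrix.mulVec_diagonal]
  rw [conj, ← Matrix.mulVec_mulVec, ← Matrix.mulVec_mulVec, h]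

lemma dot_Q (Q : Matrix (Fin p) (Fin p) ℝ) (hQ : Q * Qᵀ = 1) (x : Fin p → ℝ) :
    (Q *ᵥ x) ⬝ᵥ (Q *ᵥ x) = ∑ j, x j ^ 2 := by
  rw [Matrix.dotProduct_mulVec, ← Matrix.vecMul_transpose, Matrix.vecMul_vecMul,
    hQ' Q hQ, Matrix.vecMul_one, dotProduct]
  simp [sq]

end MseAux

open MseAux in

/-- Scalar MSE of the MAULTE. -/
theorem mse_MAULTE_eq (p : ℕ) (Q : Matrix (Fin p) (Fin p) ℝ) (hQ : Q * Qᵀ = 1)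
    (lam : Fin p → ℝ) (hlam : ∀ j, 0 < lam j) (k d : ℝ) (hk : 0 < k) (β : Fin p → ℝ) :
    (covMAULTE (Q * Matrix.diagonal lam * Qᵀ) k d).trace +
        biasMAULTE (Q * Matrix.diagonal lam * Qᵀ) k d β ⬝ᵥ
          biasMAULTE (Q * Matrix.diagonal lam * Qᵀ) k d β =
      (∑ j, (lam j - d) ^ 4 * (lam j + d + 2 * k) ^ 2 / (lam j * (lam j + k) ^ 6)) +
        (k + d) ^ 2 * ∑ j, (Qᵀ *ᵥ β) j ^ 2 *
          ((lam j + k) ^ 2 + (k + d) * (lam j - d)) ^ 2 / (lam j + k) ^ 6 := by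
  set V := Q * Matrix.diagonal lam * Qᵀ with hVdef
  have hlk : ∀ j, lam j + k ≠ 0 := fun j => by have := hlam j; positivity
  have hne : ∀ j, (lam + k • (1 : Fin p → ℝ)) j ≠ 0 := fun j => by
    simpa using hlk j
  have hl : ∀ j, lam j ≠ 0 := fun j => ne_of_gt (hlam j)
  have hVc : V = conj Q lam := rfl
  have h1 : V + k • 1 = conj Q (lam + k • (1 : Fin p → ℝ)) := by
    rw [conj_add, conj_smul, conj_one Q hQ, hVc]
  set g : Fin p → ℝ := (lam + k • (1 : Fin p → ℝ))⁻¹ with hg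
  have hA : (V + k • 1)⁻¹ = conj Q g := by
    rw [h1, conj_inv Q hQ _ hne]
  have hA2 : ((V + k • 1)⁻¹) ^ 2 = conj Q (g * g) := by
    rw [pow_two, hA, conj_mul Q hQ]
  have hVinv : V⁻¹ = conj Q lam⁻¹ := by
    rw [hVc, conj_inv Q hQ _ hl]
  set m : Fin p → ℝ := (1 - (k + d) ^ 2 • (g * g)) * (1 - (k + d) • g) with hm
  have e1 : (1 : Matrix (Fin p) (Fin p) ℝ) - (k + d) ^ 2 • conj Q (g * g) =
      conj Q (1 - (k + d) ^ 2 • (g * g)) := by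
    rw [conj_sub, conj_smul, conj_one Q hQ]
  have e2 : (1 : Matrix (Fin p) (Fin p) ℝ) - (k + d) • conj Q g =
      conj Q (1 - (k + d) • g) := by
    rw [conj_sub, conj_smul, conj_one Q hQ]
  have hM : mMAULTE V k d = conj Q m := by
    rw [mMAULTE, hA2, hA, e1, e2, conj_mul Q hQ]
  have hCov : covMAULTE V k d = conj Q (m * lam⁻¹ * m) := by
    rw [covMAULTE, hM, hVinv, conj_transpose, conj_mul Q hQ, conj_mul Q hQ]
  set h' : Fin p → ℝ := (1 + (d + k) • g - (d + k) ^ 2 • (g * g)) * g with hh'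
  have e3 : (1 : Matrix (Fin p) (Fin p) ℝ) + (d + k) • conj Q g -
      (d + k) ^ 2 • conj Q (g * g) =
      conj Q (1 + (d + k) • g - (d + k) ^ 2 • (g * g)) := by
    rw [conj_sub, conj_add, conj_smul, conj_smul, conj_one Q hQ]
  have hbM : biasMAULTE V k d β = (-(d + k)) • (conj Q h' *ᵥ β) := by
    rw [biasMAULTE, hA2, hA, e3, conj_mul Q hQ]
  have hdot : biasMAULTE V k d β ⬝ᵥ biasMAULTE V k d β =
      (d + k) ^ 2 * ∑ j, (h' j * (Qᵀ *ᵥ β) j) ^ 2 := by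
    rw [hbM, conj_mulVec, smul_dotProduct, dotProduct_smul, dot_Q Q hQ,
      smul_eq_mul, smul_eq_mul]
    ring
  rw [hCov, conj_trace Q hQ, hdot]
  have hs1 : ∀ j ∈ Finset.univ, (m * lam⁻¹ * m) j =
      (lam j - d) ^ 4 * (lam j + d + 2 * k) ^ 2 / (lam j * (lam j + k) ^ 6) := by
    intro j _
    have hx := hl j
    have hxk := hlk j
    have hkx : k + lam j ≠ 0 := by rw [add_comm]; exact hxk
    simp only [hm, hg, Pi.mul_apply, Pi.inv_apply, Pi.sub_apply, Pi.add_apply,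
      Pi.smul_apply, Pi.one_apply, smul_eq_mul, mul_one]
    field_simp [hx, hxk, hkx]
    ring
  have hs2 : ∀ j ∈ Finset.univ, (h' j * (Qᵀ *ᵥ β) j) ^ 2 =
      (Qᵀ *ᵥ β) j ^ 2 * ((lam j + k) ^ 2 + (k + d) * (lam j - d)) ^ 2 /
        (lam j + k) ^ 6 := by
    intro j _
    have hxk := hlk j
    have hkx : k + lam j ≠ 0 := by rw [add_comm]; exact hxk
    simp only [hh', hg, Pi.mul_apply, Pi.inv_apply, Pi.sub_apply, Pi.add_apply,
      Pi.smul_apply, Pi.one_apply, smul_eq_mul, mul_one]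
    field_simp [hxk, hkx]
    ring
  rw [Finset.sum_congr rfl hs1, Finset.sum_congr rfl hs2,
    show (d + k) ^ 2 = (k + d) ^ 2 by ring]
end

section
/- Let λ > 0, k > 0 and α ∈ ℝ, and define g : ℝ → ℝ by g(d) = (λ − d)²(λ + d + 2k)²/(λ(λ + k)⁴) + (k + d)⁴ α²/(λ + k)⁴. Then d* = −k + (λ + k)/√(1 + λα²) is a critical point of g, i.e. the derivative of g vanishes at d*: g′(d*) = 0. -/
/-- The optimal Liu biasing parameter `d* = −k + (λ + k)/√(1 + λα²)` is a
critical point of the single-eigenvalue contribution to the scalar MSE of the AULTE. -/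
theorem dopt_critical_point (lam k α : ℝ) (hlam : 0 < lam) (hk : 0 < k) :
    deriv (fun d : ℝ =>
        (lam - d) ^ 2 * (lam + d + 2 * k) ^ 2 / (lam * (lam + k) ^ 4) +
          (k + d) ^ 4 * α ^ 2 / (lam + k) ^ 4)
      (-k + (lam + k) / Real.sqrt (1 + lam * α ^ 2)) = 0 := by
  have hpos : (0:ℝ) < 1 + lam * α ^ 2 := by positivity
  set s := Real.sqrt (1 + lam * α ^ 2) with hsdef
  have hs0 : 0 < s := Real.sqrt_pos.mpr hpos
  have hs2 : s ^ 2 = 1 + lam * α ^ 2 := Real.sq_sqrt hpos.le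
  set d : ℝ := -k + (lam + k) / s with hd
  have h1 : HasDerivAt (fun x : ℝ => lam - x) (-1) d := by
    simpa using (hasDerivAt_id d).const_sub lam
  have h2 : HasDerivAt (fun x : ℝ => lam + x + 2 * k) 1 d := by
    simpa using ((hasDerivAt_id d).const_add lam).add_const (2 * k)
  have h3 : HasDerivAt (fun x : ℝ => k + x) 1 d := by
    simpa using (hasDerivAt_id d).const_add k
  have H : HasDerivAt (fun x : ℝ =>
        (lam - x) ^ 2 * (lam + x + 2 * k) ^ 2 / (lam * (lam + k) ^ 4) +
          (k + x) ^ 4 * α ^ 2 / (lam + k) ^ 4)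
      ((((2 : ℕ) * (lam - d) ^ 1 * (-1)) * (lam + d + 2 * k) ^ 2 +
          (lam - d) ^ 2 * ((2 : ℕ) * (lam + d + 2 * k) ^ 1 * 1)) / (lam * (lam + k) ^ 4) +
        (((4 : ℕ) * (k + d) ^ 3 * 1) * α ^ 2) / (lam + k) ^ 4) d := by
    exact (((h1.pow 2).mul (h2.pow 2)).div_const _).add
      (((h3.pow 4).mul_const (α ^ 2)).div_const _)
  rw [H.deriv]
  have hlk : lam + k ≠ 0 := by positivity
  have hkd : k + d = (lam + k) / s := by rw [hd]; ring
  have hld : lam - d = (lam + k) - (lam + k) / s := by rw [hd]; ring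
  have hl2 : lam + d + 2 * k = (lam + k) + (lam + k) / s := by rw [hd]; ring
  rw [hkd, hld, hl2]
  have hs0' : s ≠ 0 := hs0.ne'
  field_simp
  linear_combination (-4) * hs2
end
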